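/- arXiv:2603.20722 — 4 statements merged into one kernel-verified Lean document; each statement's English description precedes it below -/
import Mathlib

section
/- Let n ≥ 3 and k ∈ ℤ_n nonzero, with n ≡ 0 (mod 4) and k odd. Then for each j ∈ {0,1,2,3}, the set C = {u_{4i+j}, v_{4i+j+2} : i ∈ ℤ_n} is a perfect code in the generalized Petersen graph GP(n,k), i.e., C is an independent set and every vertex not in C has exactly one neighbor in C. -/
/-- The generalized Petersen graph GP(n,k): vertices are `Sum.inl i` (outer, u_i)
and `Sum.inr i` (inner, v_i) for `i : ZMod n`. -/
def GP (n k : ℕ) : SimpleGraph (ZMod n ⊕ ZMod n) where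
  Adj x y :=
    match x, y with
    | .inl i, .inl j => i ≠ j ∧ (j = i + 1 ∨ i = j + 1)
    | .inl i, .inr j => i = j
    | .inr i, .inl j => i = j
    | .inr i, .inr j => i ≠ j ∧ (j = i + (k : ZMod n) ∨ i = j + (k : ZMod n))
  symm := ⟨by rintro (i|i) (j|j) h <;> simp_all <;> tauto⟩
  loopless := ⟨by rintro (i|i) h <;> simp_all⟩

/-- A perfect code: an independent set such that every vertex not in `C`
has exactly one neighbor in `C`. -/
def IsPerfectCode {V : Type*} (G : SimpleGraph V) (C : Set V) : Prop :=
  (∀ x ∈ C, ∀ y ∈ C, ¬ G.Adj x y) ∧ ∀ x ∉ C, ∃! y, y ∈ C ∧ G.Adj x y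

/-- A total perfect code: every vertex has exactly one neighbor in `C`. -/
def IsTotalPerfectCode {V : Type*} (G : SimpleGraph V) (C : Set V) : Prop :=
  ∀ x, ∃! y, y ∈ C ∧ G.Adj x y

/-- Lemma 2.1: for n ≡ 0 (mod 4) and k odd, {u_{4i+j}, v_{4i+j+2} : i ∈ ℤ_n}
is a perfect code in GP(n,k), for each j ∈ {0,1,2,3}. -/
theorem stmt_0 (n k : ℕ) (hn : 3 ≤ n) (hk0 : (k : ZMod n) ≠ 0)
    (h4 : n % 4 = 0) (hk2 : k % 2 = 1) (j : ℕ) (hj : j < 4) :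
    IsPerfectCode (GP n k)
      {x | ∃ i : ZMod n, x = .inl (4 * i + (j : ZMod n)) ∨
        x = .inr (4 * i + (j : ZMod n) + 2)} := by
  have hdvd : (4:ℕ) ∣ n := Nat.dvd_of_mod_eq_zero h4
  haveI : NeZero n := ⟨by omega⟩
  set φ : ZMod n →+* ZMod 4 := ZMod.castHom hdvd (ZMod 4) with hφdef
  have hcast : ∀ y : ZMod n, φ y = (y.val : ZMod 4) := by
    intro y; simp [hφdef, ZMod.natCast_val]
  set j4 : ZMod 4 := ((j:ℕ) : ZMod 4) with hj4
  have key : ∀ x c : ZMod n, (∃ i, x = 4*i + c) ↔ φ x = φ c := by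
    intro x c
    constructor
    · rintro ⟨i, rfl⟩
      have h40 : φ 4 = 0 := by
        have h4n : ((4:ℕ):ZMod n) = (4:ZMod n) := by push_cast; ring
        rw [← h4n, map_natCast]; decide
      rw [map_add, map_mul, h40, zero_mul, zero_add]
    · intro h
      refine ⟨((((x-c).val)/4 : ℕ) : ZMod n), ?_⟩
      have h0 : φ (x - c) = 0 := by rw [map_sub, h, sub_self]
      have hval : (((x-c).val : ℕ) : ZMod 4) = 0 := by rw [← hcast]; exact h0
      have hdvd4 : 4 ∣ (x-c).val := (ZMod.natCast_eq_zero_iff _ 4).mp hval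
      have hmul : (4:ZMod n) * ((((x-c).val)/4 : ℕ) : ZMod n) = x - c := by
        have : ((4 * ((x-c).val / 4) : ℕ) : ZMod n) = (((x-c).val : ℕ) : ZMod n) := by
          rw [Nat.mul_div_cancel' hdvd4]
        push_cast at this
        rw [this]
        simp [ZMod.natCast_val, ZMod.cast_id]
      rw [hmul]; ring
  have memL : ∀ a : ZMod n, (Sum.inl a ∈
      {x : ZMod n ⊕ ZMod n | ∃ i : ZMod n, x = .inl (4 * i + (j : ZMod n)) ∨
        x = .inr (4 * i + (j : ZMod n) + 2)}) ↔ φ a = j4 := by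
    intro a
    have h1 : (Sum.inl a ∈
        {x : ZMod n ⊕ ZMod n | ∃ i : ZMod n, x = .inl (4 * i + (j : ZMod n)) ∨
          x = .inr (4 * i + (j : ZMod n) + 2)}) ↔ ∃ i : ZMod n, a = 4*i + (j:ZMod n) := by
      simp [Set.mem_setOf_eq]
    rw [h1, key a ((j:ℕ):ZMod n), map_natCast]
  have memR : ∀ a : ZMod n, (Sum.inr a ∈
      {x : ZMod n ⊕ ZMod n | ∃ i : ZMod n, x = .inl (4 * i + (j : ZMod n)) ∨
        x = .inr (4 * i + (j : ZMod n) + 2)}) ↔ φ a = j4 + 2 := by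
    intro a
    have h1 : (Sum.inr a ∈
        {x : ZMod n ⊕ ZMod n | ∃ i : ZMod n, x = .inl (4 * i + (j : ZMod n)) ∨
          x = .inr (4 * i + (j : ZMod n) + 2)}) ↔ ∃ i : ZMod n, a = 4*i + ((j:ZMod n)+2) := by
      simp [Set.mem_setOf_eq, add_assoc]
    have h2 : φ (2:ZMod n) = 2 := by
      rw [show ((2:ZMod n)) = ((2:ℕ):ZMod n) by push_cast; ring, map_natCast]
      norm_num
    rw [h1, key a ((j:ZMod n)+2), map_add, map_natCast, h2]
  have hkφ : φ ((k:ℕ):ZMod n) = ((k:ℕ) : ZMod 4) := map_natCast φ k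
  have hodd : ((k:ℕ):ZMod 4) = 1 ∨ ((k:ℕ):ZMod 4) = 3 := by
    obtain ⟨m, hm⟩ : ∃ m, k = 2*m+1 := ⟨k/2, by omega⟩
    subst hm; push_cast
    exact (by decide : ∀ z : ZMod 4, 2*z+1 = 1 ∨ 2*z+1 = 3) m
  have cases4 : ∀ a : ZMod n, φ a = j4 ∨ φ a = j4+1 ∨ φ a = j4+2 ∨ φ a = j4+3 :=
    fun a => (by decide : ∀ w z : ZMod 4, w = z ∨ w = z+1 ∨ w = z+2 ∨ w = z+3) (φ a) j4
  constructor
  · -- independence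
    rintro x hx y hy hadj
    obtain a | a := x <;> obtain b | b := y
    · have ha := (memL a).mp hx
      have hb := (memL b).mp hy
      obtain ⟨hne, hb1 | hb1⟩ : a ≠ b ∧ (b = a + 1 ∨ a = b + 1) := hadj
      · rw [hb1, map_add, ha, map_one] at hb
        exact (by decide : ∀ z : ZMod 4, z + 1 ≠ z) j4 hb
      · rw [hb1, map_add, hb, map_one] at ha
        exact (by decide : ∀ z : ZMod 4, z + 1 ≠ z) j4 ha
    · have ha := (memL a).mp hx
      have hb := (memR b).mp hy
      have hab : a = b := hadj
      rw [← hab, ha] at hb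
      exact (by decide : ∀ z : ZMod 4, z + 2 ≠ z) j4 hb.symm
    · have ha := (memR a).mp hx
      have hb := (memL b).mp hy
      have hab : a = b := hadj
      rw [← hab, ha] at hb
      exact (by decide : ∀ z : ZMod 4, z + 2 ≠ z) j4 hb
    · have ha := (memR a).mp hx
      have hb := (memR b).mp hy
      obtain ⟨hne, hb1 | hb1⟩ :
          a ≠ b ∧ (b = a + ((k:ℕ):ZMod n) ∨ a = b + ((k:ℕ):ZMod n)) := hadj
      · rw [hb1, map_add, ha, hkφ] at hb
        rcases hodd with ht | ht <;> rw [ht] at hb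
        · exact (by decide : ∀ z : ZMod 4, z + 1 ≠ z) (j4+2) hb
        · exact (by decide : ∀ z : ZMod 4, z + 3 ≠ z) (j4+2) hb
      · rw [hb1, map_add, hb, hkφ] at ha
        rcases hodd with ht | ht <;> rw [ht] at ha
        · exact (by decide : ∀ z : ZMod 4, z + 1 ≠ z) (j4+2) ha
        · exact (by decide : ∀ z : ZMod 4, z + 3 ≠ z) (j4+2) ha
  · -- perfect domination
    rintro x hx
    obtain a | a := x
    · have ha : φ a ≠ j4 := fun h => hx ((memL a).mpr h)
      rcases cases4 a with h | h | h | h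
      · exact absurd h ha
      · -- φ a = j4+1 : witness u_{a-1}
        refine ⟨Sum.inl (a-1), ⟨(memL _).mpr ?_, ?_⟩, ?_⟩
        · rw [map_sub, h, map_one]
          exact (by decide : ∀ z : ZMod 4, z+1-1 = z) j4
        · refine (⟨?_, Or.inr (by ring)⟩ : a ≠ a - 1 ∧ (a - 1 = a + 1 ∨ a = a - 1 + 1))
          intro he
          have := congrArg φ he
          rw [map_sub, map_one, h] at this
          exact (by decide : ∀ z : ZMod 4, ¬(z+1 = z+1-1)) j4 this
        · rintro y ⟨hyC, hyadj⟩
          obtain b | b := y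
          · obtain ⟨hne, hb | hb⟩ : a ≠ b ∧ (b = a + 1 ∨ a = b + 1) := hyadj
            · have hbC := (memL b).mp hyC
              rw [hb, map_add, h, map_one] at hbC
              exact absurd hbC ((by decide : ∀ z : ZMod 4, z+1+1 ≠ z) j4)
            · exact congrArg Sum.inl (eq_sub_of_add_eq hb.symm)
          · have hab : a = b := hyadj
            have hbC := (memR b).mp hyC
            rw [← hab, h] at hbC
            exact absurd hbC ((by decide : ∀ z : ZMod 4, z+1 ≠ z+2) j4)
      · -- φ a = j4+2 : witness v_a
        refine ⟨Sum.inr a, ⟨(memR _).mpr h, rfl⟩, ?_⟩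
        rintro y ⟨hyC, hyadj⟩
        obtain b | b := y
        · obtain ⟨hne, hb | hb⟩ : a ≠ b ∧ (b = a + 1 ∨ a = b + 1) := hyadj
          · have hbC := (memL b).mp hyC
            rw [hb, map_add, h, map_one] at hbC
            exact absurd hbC ((by decide : ∀ z : ZMod 4, z+2+1 ≠ z) j4)
          · have hbC := (memL b).mp hyC
            have hb' : b = a - 1 := eq_sub_of_add_eq hb.symm
            rw [hb', map_sub, h, map_one] at hbC
            exact absurd hbC ((by decide : ∀ z : ZMod 4, z+2-1 ≠ z) j4)
        · have hab : a = b := hyadj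
          exact congrArg Sum.inr hab.symm
      · -- φ a = j4+3 : witness u_{a+1}
        refine ⟨Sum.inl (a+1), ⟨(memL _).mpr ?_, ?_⟩, ?_⟩
        · rw [map_add, h, map_one]
          exact (by decide : ∀ z : ZMod 4, z+3+1 = z) j4
        · refine (⟨?_, Or.inl rfl⟩ : a ≠ a + 1 ∧ (a + 1 = a + 1 ∨ a = a + 1 + 1))
          intro he
          have := congrArg φ he
          rw [map_add, map_one] at this
          exact (by decide : ∀ z : ZMod 4, ¬(z = z+1)) (φ a) this
        · rintro y ⟨hyC, hyadj⟩
          obtain b | b := y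
          · obtain ⟨hne, hb | hb⟩ : a ≠ b ∧ (b = a + 1 ∨ a = b + 1) := hyadj
            · exact congrArg Sum.inl hb
            · have hbC := (memL b).mp hyC
              have hb' : b = a - 1 := eq_sub_of_add_eq hb.symm
              rw [hb', map_sub, h, map_one] at hbC
              exact absurd hbC ((by decide : ∀ z : ZMod 4, z+3-1 ≠ z) j4)
          · have hab : a = b := hyadj
            have hbC := (memR b).mp hyC
            rw [← hab, h] at hbC
            exact absurd hbC ((by decide : ∀ z : ZMod 4, z+3 ≠ z+2) j4)
    · have ha : φ a ≠ j4 + 2 := fun h => hx ((memR a).mpr h)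
      have hknz : a ≠ a + ((k:ℕ):ZMod n) ∧ a ≠ a - ((k:ℕ):ZMod n) := by
        constructor <;> intro he <;> have := congrArg φ he
        · rw [map_add, hkφ] at this
          rcases hodd with ht | ht <;> rw [ht] at this
          · exact (by decide : ∀ z : ZMod 4, ¬(z = z+1)) (φ a) this
          · exact (by decide : ∀ z : ZMod 4, ¬(z = z+3)) (φ a) this
        · rw [map_sub, hkφ] at this
          rcases hodd with ht | ht <;> rw [ht] at this
          · exact (by decide : ∀ z : ZMod 4, ¬(z = z-1)) (φ a) this
          · exact (by decide : ∀ z : ZMod 4, ¬(z = z-3)) (φ a) this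
      rcases cases4 a with h | h | h | h
      · -- φ a = j4 : witness u_a
        refine ⟨Sum.inl a, ⟨(memL _).mpr h, rfl⟩, ?_⟩
        rintro y ⟨hyC, hyadj⟩
        obtain b | b := y
        · have hab : a = b := hyadj
          exact congrArg Sum.inl hab.symm
        · obtain ⟨hne, hb | hb⟩ :
              a ≠ b ∧ (b = a + ((k:ℕ):ZMod n) ∨ a = b + ((k:ℕ):ZMod n)) := hyadj
          · have hbC := (memR b).mp hyC
            rw [hb, map_add, h, hkφ] at hbC
            rcases hodd with ht | ht <;> rw [ht] at hbC
            · exact absurd hbC ((by decide : ∀ z : ZMod 4, z+1 ≠ z+2) j4)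
            · exact absurd hbC ((by decide : ∀ z : ZMod 4, z+3 ≠ z+2) j4)
          · have hbC := (memR b).mp hyC
            have hb' : b = a - ((k:ℕ):ZMod n) := eq_sub_of_add_eq hb.symm
            rw [hb', map_sub, h, hkφ] at hbC
            rcases hodd with ht | ht <;> rw [ht] at hbC
            · exact absurd hbC ((by decide : ∀ z : ZMod 4, z-1 ≠ z+2) j4)
            · exact absurd hbC ((by decide : ∀ z : ZMod 4, z-3 ≠ z+2) j4)
      · -- φ a = j4+1 : witness v_{a+k} if k≡1, v_{a-k} if k≡3
        rcases hodd with ht | ht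
        · refine ⟨Sum.inr (a + ((k:ℕ):ZMod n)), ⟨(memR _).mpr ?_,
            (⟨hknz.1, Or.inl rfl⟩ : a ≠ a + ((k:ℕ):ZMod n) ∧ _)⟩, ?_⟩
          · rw [map_add, h, hkφ, ht]; ring
          · rintro y ⟨hyC, hyadj⟩
            obtain b | b := y
            · have hab : a = b := hyadj
              have hbC := (memL b).mp hyC
              rw [← hab, h] at hbC
              exact absurd hbC ((by decide : ∀ z : ZMod 4, z+1 ≠ z) j4)
            · obtain ⟨hne, hb | hb⟩ :
                  a ≠ b ∧ (b = a + ((k:ℕ):ZMod n) ∨ a = b + ((k:ℕ):ZMod n)) := hyadj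
              · exact congrArg Sum.inr hb
              · have hbC := (memR b).mp hyC
                have hb' : b = a - ((k:ℕ):ZMod n) := eq_sub_of_add_eq hb.symm
                rw [hb', map_sub, h, hkφ, ht] at hbC
                exact absurd hbC ((by decide : ∀ z : ZMod 4, z+1-1 ≠ z+2) j4)
        · refine ⟨Sum.inr (a - ((k:ℕ):ZMod n)), ⟨(memR _).mpr ?_,
            (⟨hknz.2, Or.inr (by ring)⟩ : a ≠ a - ((k:ℕ):ZMod n) ∧ _)⟩, ?_⟩
          · rw [map_sub, h, hkφ, ht]
            exact (by decide : ∀ z : ZMod 4, z+1-3 = z+2) j4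
          · rintro y ⟨hyC, hyadj⟩
            obtain b | b := y
            · have hab : a = b := hyadj
              have hbC := (memL b).mp hyC
              rw [← hab, h] at hbC
              exact absurd hbC ((by decide : ∀ z : ZMod 4, z+1 ≠ z) j4)
            · obtain ⟨hne, hb | hb⟩ :
                  a ≠ b ∧ (b = a + ((k:ℕ):ZMod n) ∨ a = b + ((k:ℕ):ZMod n)) := hyadj
              · have hbC := (memR b).mp hyC
                rw [hb, map_add, h, hkφ, ht] at hbC
                exact absurd hbC ((by decide : ∀ z : ZMod 4, z+1+3 ≠ z+2) j4)
              · exact congrArg Sum.inr (eq_sub_of_add_eq hb.symm)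
      · exact absurd h ha
      · -- φ a = j4+3 : witness v_{a-k} if k≡1, v_{a+k} if k≡3
        rcases hodd with ht | ht
        · refine ⟨Sum.inr (a - ((k:ℕ):ZMod n)), ⟨(memR _).mpr ?_,
            (⟨hknz.2, Or.inr (by ring)⟩ : a ≠ a - ((k:ℕ):ZMod n) ∧ _)⟩, ?_⟩
          · rw [map_sub, h, hkφ, ht]
            exact (by decide : ∀ z : ZMod 4, z+3-1 = z+2) j4
          · rintro y ⟨hyC, hyadj⟩
            obtain b | b := y
            · have hab : a = b := hyadj
              have hbC := (memL b).mp hyC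
              rw [← hab, h] at hbC
              exact absurd hbC ((by decide : ∀ z : ZMod 4, z+3 ≠ z) j4)
            · obtain ⟨hne, hb | hb⟩ :
                  a ≠ b ∧ (b = a + ((k:ℕ):ZMod n) ∨ a = b + ((k:ℕ):ZMod n)) := hyadj
              · have hbC := (memR b).mp hyC
                rw [hb, map_add, h, hkφ, ht] at hbC
                exact absurd hbC ((by decide : ∀ z : ZMod 4, z+3+1 ≠ z+2) j4)
              · exact congrArg Sum.inr (eq_sub_of_add_eq hb.symm)
        · refine ⟨Sum.inr (a + ((k:ℕ):ZMod n)), ⟨(memR _).mpr ?_,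
            (⟨hknz.1, Or.inl rfl⟩ : a ≠ a + ((k:ℕ):ZMod n) ∧ _)⟩, ?_⟩
          · rw [map_add, h, hkφ, ht]
            exact (by decide : ∀ z : ZMod 4, z+3+3 = z+2) j4
          · rintro y ⟨hyC, hyadj⟩
            obtain b | b := y
            · have hab : a = b := hyadj
              have hbC := (memL b).mp hyC
              rw [← hab, h] at hbC
              exact absurd hbC ((by decide : ∀ z : ZMod 4, z+3 ≠ z) j4)
            · obtain ⟨hne, hb | hb⟩ :
                  a ≠ b ∧ (b = a + ((k:ℕ):ZMod n) ∨ a = b + ((k:ℕ):ZMod n)) := hyadj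
              · exact congrArg Sum.inr hb
              · have hbC := (memR b).mp hyC
                have hb' : b = a - ((k:ℕ):ZMod n) := eq_sub_of_add_eq hb.symm
                rw [hb', map_sub, h, hkφ, ht] at hbC
                exact absurd hbC ((by decide : ∀ z : ZMod 4, z+3-3 ≠ z+2) j4)
end

section
/- A subset C of the vertices of GP(n,k) is a perfect code if and only if n ≡ 0 (mod 4), k ≡ 1 (mod 2), and C = {u_{4i+j}, v_{4i+j+2} : i ∈ ℤ_n} for some j ∈ {0,1,2,3}. -/
structure PCData (n : ℕ) where
  z : ZMod n
  A : ZMod n → ℕ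
  B : ZMod n → ℕ
  hA : ∀ i, A i ≤ 1
  hB : ∀ i, B i ≤ 1
  E1 : ∀ i, A (i-1) + A i + A (i+1) + B i = 1
  E2 : ∀ i, B (i - z) + B i + B (i + z) + A i = 1

namespace PCData
variable {n : ℕ} (D : PCData n)

/-- Basic consequences of B b = 1. -/
lemma L0 (b : ZMod n) (hb : D.B b = 1) :
    D.A b = 0 ∧ D.B (b + D.z) = 0 ∧ D.B (b - D.z) = 0 ∧ D.A (b + D.z) = 0 ∧
      D.A (b - D.z) = 0 ∧ D.A (b + 1) = 0 ∧ D.A (b - 1) = 0 := by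
  have h1 := D.E2 b
  have h2 := D.E2 (b + D.z); rw [add_sub_cancel_right] at h2
  have h3 := D.E2 (b - D.z); rw [sub_add_cancel] at h3
  have h4 := D.E1 b
  have := D.hB (b + D.z + D.z); have := D.hB (b - D.z - D.z)
  have := D.hA (b+1); have := D.hA (b-1); have := D.hA b
  have := D.hA (b + D.z); have := D.hA (b - D.z)
  have := D.hB (b+1); have := D.hB (b-1)
  omega

/-- No two B's at distance 1. -/
lemma Ladj (b : ZMod n) (hb : D.B b = 1) (hb1 : D.B (b+1) = 1) : False := by
  obtain ⟨hAb, hBp, hBm, hAp, hAm, hA1, hA1'⟩ := D.L0 b hb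
  obtain ⟨hAb', hBp', hBm', hAp', hAm', hA1'', hA1'''⟩ := D.L0 (b+1) hb1
  have e1 := D.E1 (b + D.z)
  rw [show b + 1 + D.z = b + D.z + 1 by ring] at hAp'
  have hA1p : D.A (b + D.z - 1) = 1 := by have := D.hA (b + D.z - 1); omega
  have e2 := D.E1 (b - D.z)
  rw [show b + 1 - D.z = b - D.z + 1 by ring] at hAm'
  have hA1m : D.A (b - D.z - 1) = 1 := by have := D.hA (b - D.z - 1); omega
  have e3 := D.E2 (b - 1)
  rw [show b - 1 - D.z = b - D.z - 1 by ring, show b - 1 + D.z = b + D.z - 1 by ring] at e3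
  have hcase : D.B (b - D.z - 1) = 1 ∨ D.B (b-1) = 1 ∨ D.B (b + D.z - 1) = 1 := by
    have := D.hB (b - D.z - 1); have := D.hB (b + D.z - 1); have := D.hB (b-1); omega
  rcases hcase with h | h | h
  · have := (D.L0 _ h).1; omega
  · have h0 := (D.L0 _ h).2.2.2.1
    rw [show b - 1 + D.z = b + D.z - 1 by ring] at h0; omega
  · have := (D.L0 _ h).1; omega

/-- No two B's at distance 2. -/
lemma L2 (b : ZMod n) (hb : D.B b = 1) (hb2 : D.B (b+2) = 1) : False := by
  have hB1 : D.B (b+1) = 0 := by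
    have := D.hB (b+1)
    rcases Nat.lt_or_ge (D.B (b+1)) 1 with h | h
    · omega
    · exact absurd (D.Ladj b hb (by omega)) not_false
  have hA1 := (D.L0 b hb).2.2.2.2.2.1
  have hA2 := (D.L0 _ hb2).1
  have hAb := (D.L0 b hb).1
  have e := D.E1 (b+1)
  rw [show b + 1 - 1 = b by ring, show b + 1 + 1 = b + 2 by ring] at e
  omega

/-- The 4-periodic pattern: one full period from a position with A t = 1. -/
lemma L3 (t : ZMod n) (ht : D.A t = 1) :
    D.A (t+1) = 0 ∧ D.A (t+2) = 0 ∧ D.A (t+3) = 0 ∧ D.A (t+4) = 1 ∧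
      D.B t = 0 ∧ D.B (t+1) = 0 ∧ D.B (t+2) = 1 ∧ D.B (t+3) = 0 := by
  have e0 := D.E1 t
  have hBt : D.B t = 0 := by have := D.hA (t-1); have := D.hA (t+1); have := D.hB t; omega
  have hA1 : D.A (t+1) = 0 := by have := D.hA (t-1); have := D.hA (t+1); have := D.hB t; omega
  have e1 := D.E1 (t+1)
  rw [show t + 1 - 1 = t by ring, show t + 1 + 1 = t + 2 by ring] at e1
  have hA2 : D.A (t+2) = 0 := by have := D.hA (t+2); have := D.hB (t+1); omega
  have hB1 : D.B (t+1) = 0 := by have := D.hA (t+2); have := D.hB (t+1); omega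
  have e2 := D.E1 (t+2)
  rw [show t + 2 - 1 = t + 1 by ring, show t + 2 + 1 = t + 3 by ring] at e2
  -- exclude gap 3 : A (t+3) = 1 impossible
  have hA3 : D.A (t+3) = 0 := by
    by_contra h
    have hA3 : D.A (t+3) = 1 := by have := D.hA (t+3); omega
    have hB2 : D.B (t+2) = 0 := by have := D.hB (t+2); omega
    -- facts from A t = 1 via E2 t
    have f0 := D.E2 t
    have hBtz : D.B (t + D.z) = 0 ∧ D.B (t - D.z) = 0 := by
      have := D.hB (t + D.z); have := D.hB (t - D.z); omega
    -- facts from A (t+3) = 1 via E2 (t+3)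
    have f3 := D.E2 (t+3)
    have hBt3z : D.B (t+3 + D.z) = 0 ∧ D.B (t+3 - D.z) = 0 := by
      have := D.hB (t+3 + D.z); have := D.hB (t+3 - D.z); have := D.hB (t+3); omega
    -- E2 at t+1 and t+2
    have f1 := D.E2 (t+1)
    have f2 := D.E2 (t+2)
    have hc1 : D.B (t+1 - D.z) = 1 ∨ D.B (t+1 + D.z) = 1 := by
      have := D.hB (t+1-D.z); have := D.hB (t+1+D.z); omega
    have hc2 : D.B (t+2 - D.z) = 1 ∨ D.B (t+2 + D.z) = 1 := by
      have := D.hB (t+2-D.z); have := D.hB (t+2+D.z); omega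
    rcases hc1 with h1 | h1 <;> rcases hc2 with h2 | h2
    · -- both minus : distance 1
      rw [show t + 2 - D.z = (t + 1 - D.z) + 1 by ring] at h2
      exact D.Ladj _ h1 h2
    ·
      obtain ⟨-, -, -, -, -, hAp1, hAm1⟩ := D.L0 _ h1
      rw [show t + 1 - D.z + 1 = t + 2 - D.z by ring] at hAp1
      rw [show t + 1 - D.z - 1 = t - D.z by ring] at hAm1
      -- E2 at t - z : gives B (t - z - z) = 1
      have g1 := D.E2 (t - D.z)
      rw [sub_add_cancel] at g1
      have hBm2 : D.B (t - D.z - D.z) = 1 := by have := D.hB (t - D.z - D.z); omega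
      -- E2 at t + 2 - z : gives B (t+2-z-z) = 1
      have g2 := D.E2 (t + 2 - D.z)
      rw [sub_add_cancel] at g2
      have hB2' : D.B (t+2-D.z) = 0 := by have := D.hB (t+2-D.z); omega
      have hBm2' : D.B (t + 2 - D.z - D.z) = 1 := by
        have := D.hB (t + 2 - D.z - D.z); omega
      rw [show t + 2 - D.z - D.z = (t - D.z - D.z) + 2 by ring] at hBm2'
      exact D.L2 _ hBm2 hBm2'
    · -- plus, minus : case (c)
      obtain ⟨-, -, -, -, -, hAp1, hAm1⟩ := D.L0 _ h1
      rw [show t + 1 + D.z + 1 = t + 2 + D.z by ring] at hAp1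
      rw [show t + 1 + D.z - 1 = t + D.z by ring] at hAm1
      have g1 := D.E2 (t + D.z)
      rw [add_sub_cancel_right] at g1
      have hBp2 : D.B (t + D.z + D.z) = 1 := by have := D.hB (t + D.z + D.z); omega
      have g2 := D.E2 (t + 2 + D.z)
      rw [add_sub_cancel_right] at g2
      have hB2' : D.B (t+2+D.z) = 0 := by have := D.hB (t+2+D.z); omega
      have hBp2' : D.B (t + 2 + D.z + D.z) = 1 := by
        have := D.hB (t + 2 + D.z + D.z); omega
      rw [show t + 2 + D.z + D.z = (t + D.z + D.z) + 2 by ring] at hBp2'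
      exact D.L2 _ hBp2 hBp2'
    · -- both plus : distance 1
      rw [show t + 2 + D.z = (t + 1 + D.z) + 1 by ring] at h2
      exact D.Ladj _ h1 h2
  have hB2 : D.B (t+2) = 1 := by omega
  have hB3 : D.B (t+3) = 0 := by
    have := D.hB (t+3)
    rcases Nat.lt_or_ge (D.B (t+3)) 1 with h | h
    · omega
    · exact absurd (D.Ladj _ hB2 (by rw [show t+2+1 = t+3 by ring]; omega)) not_false
  have e3 := D.E1 (t+3)
  rw [show t + 3 - 1 = t + 2 by ring, show t + 3 + 1 = t + 4 by ring] at e3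
  have hA4 : D.A (t+4) = 1 := by have := D.hA (t+4); omega
  exact ⟨hA1, hA2, hA3, hA4, hBt, hB1, hB2, hB3⟩

lemma L4 (t : ZMod n) (ht : D.A t = 1) : ∀ m : ℕ, D.A (t + 4*(m : ZMod n)) = 1 := by
  intro m
  induction m with
  | zero => simpa using ht
  | succ p ih =>
    have h4 := (D.L3 _ ih).2.2.2.1
    have hc : (((p+1:ℕ)) : ZMod n) = (p:ZMod n)+1 := by push_cast; ring
    rw [hc, show t + 4*((p:ZMod n)+1) = t + 4*(p:ZMod n) + 4 by ring]
    exact h4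

/-- Full pattern along naturals. -/
lemma L5 (t : ZMod n) (ht : D.A t = 1) (d : ℕ) :
    D.A (t + (d : ZMod n)) = (if d % 4 = 0 then 1 else 0) ∧
      D.B (t + (d : ZMod n)) = (if d % 4 = 2 then 1 else 0) := by
  obtain ⟨q, r, hr, rfl⟩ : ∃ q r, r < 4 ∧ d = 4*q + r :=
    ⟨d/4, d % 4, Nat.mod_lt _ (by norm_num), (Nat.div_add_mod d 4).symm⟩
  have hq := D.L4 t ht q
  obtain ⟨a1, a2, a3, a4, b0, b1, b2, b3⟩ := D.L3 _ hq
  have hmod : (4*q + r) % 4 = r := by omega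
  rw [hmod]
  have hcast : (((4*q + r : ℕ)) : ZMod n) = 4*(q : ZMod n) + (r : ZMod n) := by push_cast; ring
  rw [hcast, ← add_assoc]
  interval_cases r
  · simpa using ⟨hq, b0⟩
  · simpa using ⟨a1, b1⟩
  · simpa using ⟨a2, b2⟩
  · simpa using ⟨a3, b3⟩

end PCData

section glue
variable {n k : ℕ}

lemma key {C : Set (ZMod n ⊕ ZMod n)} (h : IsPerfectCode (GP n k) C) :
    ∀ x, ∃! y, y ∈ C ∧ (y = x ∨ (GP n k).Adj x y) := by
  intro x
  by_cases hx : x ∈ C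
  · refine ⟨x, ⟨hx, Or.inl rfl⟩, ?_⟩
    rintro y ⟨hyC, rfl | hadj⟩
    · rfl
    · exact absurd hadj (h.1 x hx y hyC)
  · obtain ⟨y, ⟨hyC, hyA⟩, hu⟩ := h.2 x hx
    refine ⟨y, ⟨hyC, Or.inr hyA⟩, ?_⟩
    rintro y' ⟨hy'C, rfl | hadj⟩
    · exact absurd hy'C hx
    · exact hu y' ⟨hy'C, hadj⟩

lemma nbhd_outer (h1 : (1 : ZMod n) ≠ 0) (i : ZMod n) (y : ZMod n ⊕ ZMod n) :
    (y = Sum.inl i ∨ (GP n k).Adj (Sum.inl i) y) ↔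
      (y = Sum.inl i ∨ y = Sum.inl (i-1) ∨ y = Sum.inl (i+1) ∨ y = Sum.inr i) := by
  rcases y with a | a
  · have hadj : (GP n k).Adj (Sum.inl i) (Sum.inl a) ↔ i ≠ a ∧ (a = i + 1 ∨ i = a + 1) :=
      Iff.rfl
    simp only [Sum.inl.injEq, hadj, reduceCtorEq, or_false]
    constructor
    · rintro (h | ⟨hne, h | h⟩)
      · exact Or.inl h
      · exact Or.inr (Or.inr h)
      · exact Or.inr (Or.inl (eq_sub_of_add_eq h.symm))
    · rintro (h | h | h)
      · exact Or.inl h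
      · subst h
        refine Or.inr ⟨fun hc => h1 ?_, Or.inr (by ring)⟩
        · have : i - (i - 1) = 0 := by rw [← hc]; ring
          calc (1:ZMod n) = i - (i-1) := by ring
          _ = 0 := this
      · subst h
        refine Or.inr ⟨fun hc => h1 ?_, Or.inl rfl⟩
        have : (i + 1) - i = 0 := by rw [← hc]; ring
        calc (1:ZMod n) = (i+1) - i := by ring
        _ = 0 := this
  · have hadj : (GP n k).Adj (Sum.inl i) (Sum.inr a) ↔ i = a := Iff.rfl
    simp only [Sum.inr.injEq, hadj, reduceCtorEq, false_or, Sum.inl.injEq, or_self]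
    exact eq_comm

lemma nbhd_inner (hz : (k : ZMod n) ≠ 0) (i : ZMod n) (y : ZMod n ⊕ ZMod n) :
    (y = Sum.inr i ∨ (GP n k).Adj (Sum.inr i) y) ↔
      (y = Sum.inr i ∨ y = Sum.inr (i-(k:ZMod n)) ∨ y = Sum.inr (i+(k:ZMod n)) ∨
        y = Sum.inl i) := by
  rcases y with a | a
  · have hadj : (GP n k).Adj (Sum.inr i) (Sum.inl a) ↔ i = a := Iff.rfl
    simp only [Sum.inl.injEq, hadj, reduceCtorEq, false_or, Sum.inr.injEq, or_self]
    exact eq_comm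
  · have hadj : (GP n k).Adj (Sum.inr i) (Sum.inr a) ↔
      i ≠ a ∧ (a = i + (k:ZMod n) ∨ i = a + (k:ZMod n)) := Iff.rfl
    simp only [Sum.inr.injEq, hadj, reduceCtorEq, or_false]
    constructor
    · rintro (h | ⟨hne, h | h⟩)
      · exact Or.inl h
      · exact Or.inr (Or.inr h)
      · exact Or.inr (Or.inl (eq_sub_of_add_eq h.symm))
    · rintro (h | h | h)
      · exact Or.inl h
      · subst h
        refine Or.inr ⟨fun hc => hz ?_, Or.inr (by ring)⟩
        have : i - (i - (k:ZMod n)) = 0 := by rw [← hc]; ring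
        calc (k:ZMod n) = i - (i-(k:ZMod n)) := by ring
        _ = 0 := this
      · subst h
        refine Or.inr ⟨fun hc => hz ?_, Or.inl rfl⟩
        have : (i + (k:ZMod n)) - i = 0 := by rw [← hc]; ring
        calc (k:ZMod n) = (i+(k:ZMod n)) - i := by ring
        _ = 0 := this

lemma indicator_sum (P1 P2 P3 P4 : Prop) [Decidable P1] [Decidable P2] [Decidable P3]
    [Decidable P4] (h : P1 ∨ P2 ∨ P3 ∨ P4)
    (h12 : ¬(P1∧P2)) (h13 : ¬(P1∧P3)) (h14 : ¬(P1∧P4)) (h23 : ¬(P2∧P3))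
    (h24 : ¬(P2∧P4)) (h34 : ¬(P3∧P4)) :
    (if P1 then 1 else 0) + (if P2 then 1 else 0) + (if P3 then 1 else 0) +
      (if P4 then 1 else 0) = 1 := by
  by_cases P1 <;> by_cases P2 <;> by_cases P3 <;> by_cases P4 <;> simp_all

end glue

section glue2
variable {n k : ℕ}

lemma zmod_one_ne_zero (hn : 3 ≤ n) : (1 : ZMod n) ≠ 0 := by
  haveI : NeZero n := ⟨by omega⟩
  intro h
  have h2 : ((1:ℕ) : ZMod n) = 0 := by exact_mod_cast h
  rw [ZMod.natCast_eq_zero_iff] at h2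
  have := Nat.le_of_dvd (by norm_num) h2
  omega

lemma zmod_two_ne_zero (hn : 3 ≤ n) : (2 : ZMod n) ≠ 0 := by
  haveI : NeZero n := ⟨by omega⟩
  intro h
  have h2 : ((2:ℕ) : ZMod n) = 0 := by exact_mod_cast h
  rw [ZMod.natCast_eq_zero_iff] at h2
  have := Nat.le_of_dvd (by norm_num) h2
  omega

lemma indicator_sum3 (P1 P2 P3 : Prop) [Decidable P1] [Decidable P2] [Decidable P3]
    (h : P1 ∨ P2 ∨ P3) (h12 : ¬(P1∧P2)) (h13 : ¬(P1∧P3)) (h23 : ¬(P2∧P3)) :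
    (if P1 then 1 else 0) + (if P2 then 1 else 0) + (if P3 then 1 else 0) = 1 := by
  by_cases P1 <;> by_cases P2 <;> by_cases P3 <;> simp_all

lemma extract (hn : 3 ≤ n) (hk0 : (k:ZMod n) ≠ 0)
    (hz2 : (k:ZMod n) + (k:ZMod n) ≠ 0)
    {C : Set (ZMod n ⊕ ZMod n)} (h : IsPerfectCode (GP n k) C) :
    ∃ D : PCData n, D.z = (k:ZMod n) ∧ (∀ i, (D.A i = 1 ↔ Sum.inl i ∈ C)) ∧
      (∀ i, (D.B i = 1 ↔ Sum.inr i ∈ C)) := by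
  classical
  have h1 := zmod_one_ne_zero hn
  have h2 := zmod_two_ne_zero hn
  set z : ZMod n := (k : ZMod n) with hzdef
  refine ⟨⟨z, fun i => if Sum.inl i ∈ C then 1 else 0,
    fun i => if Sum.inr i ∈ C then 1 else 0,
    fun i => by split <;> omega, fun i => by split <;> omega, ?_, ?_⟩,
    rfl, fun i => by dsimp; split <;> simp_all, fun i => by dsimp; split <;> simp_all⟩
  · -- E1
    intro i
    obtain ⟨y, ⟨hyC, hyN⟩, hu⟩ := key h (Sum.inl i)
    rw [nbhd_outer h1] at hyN
    have u0 : Sum.inl i ∈ C → Sum.inl i = y := fun hc =>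
      hu _ ⟨hc, (nbhd_outer h1 i _).mpr (Or.inl rfl)⟩
    have um : Sum.inl (i-1) ∈ C → Sum.inl (i-1) = y := fun hc =>
      hu _ ⟨hc, (nbhd_outer h1 i _).mpr (Or.inr (Or.inl rfl))⟩
    have up : Sum.inl (i+1) ∈ C → Sum.inl (i+1) = y := fun hc =>
      hu _ ⟨hc, (nbhd_outer h1 i _).mpr (Or.inr (Or.inr (Or.inl rfl)))⟩
    have uv : Sum.inr i ∈ C → Sum.inr i = y := fun hc =>
      hu _ ⟨hc, (nbhd_outer h1 i _).mpr (Or.inr (Or.inr (Or.inr rfl)))⟩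
    apply indicator_sum
    · rcases hyN with rfl | rfl | rfl | rfl
      · exact Or.inr (Or.inl hyC)
      · exact Or.inl hyC
      · exact Or.inr (Or.inr (Or.inl hyC))
      · exact Or.inr (Or.inr (Or.inr hyC))
    · rintro ⟨c1, c2⟩
      have heq := (um c1).trans (u0 c2).symm
      simp only [Sum.inl.injEq] at heq
      exact h1 (sub_eq_self.mp heq)
    · rintro ⟨c1, c2⟩
      have heq := (um c1).trans (up c2).symm
      simp only [Sum.inl.injEq] at heq
      exact h2 (by linear_combination -heq)
    · rintro ⟨c1, c2⟩
      exact absurd ((um c1).trans (uv c2).symm) (by simp)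
    · rintro ⟨c1, c2⟩
      have heq := (u0 c1).trans (up c2).symm
      simp only [Sum.inl.injEq] at heq
      exact h1 ((left_eq_add).mp heq)
    · rintro ⟨c1, c2⟩
      exact absurd ((u0 c1).trans (uv c2).symm) (by simp)
    · rintro ⟨c1, c2⟩
      exact absurd ((up c1).trans (uv c2).symm) (by simp)
  · -- E2
    intro i
    obtain ⟨y, ⟨hyC, hyN⟩, hu⟩ := key h (Sum.inr i)
    rw [nbhd_inner hk0] at hyN
    have u0 : Sum.inr i ∈ C → Sum.inr i = y := fun hc =>
      hu _ ⟨hc, (nbhd_inner hk0 i _).mpr (Or.inl rfl)⟩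
    have um : Sum.inr (i-z) ∈ C → Sum.inr (i-z) = y := fun hc =>
      hu _ ⟨hc, (nbhd_inner hk0 i _).mpr (Or.inr (Or.inl rfl))⟩
    have up : Sum.inr (i+z) ∈ C → Sum.inr (i+z) = y := fun hc =>
      hu _ ⟨hc, (nbhd_inner hk0 i _).mpr (Or.inr (Or.inr (Or.inl rfl)))⟩
    have uv : Sum.inl i ∈ C → Sum.inl i = y := fun hc =>
      hu _ ⟨hc, (nbhd_inner hk0 i _).mpr (Or.inr (Or.inr (Or.inr rfl)))⟩
    apply indicator_sum
    · rcases hyN with rfl | rfl | rfl | rfl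
      · exact Or.inr (Or.inl hyC)
      · exact Or.inl hyC
      · exact Or.inr (Or.inr (Or.inl hyC))
      · exact Or.inr (Or.inr (Or.inr hyC))
    · rintro ⟨c1, c2⟩
      have heq := (um c1).trans (u0 c2).symm
      simp only [Sum.inr.injEq] at heq
      exact hk0 (sub_eq_self.mp heq)
    · rintro ⟨c1, c2⟩
      have heq := (um c1).trans (up c2).symm
      simp only [Sum.inr.injEq] at heq
      exact hz2 (by linear_combination -heq)
    · rintro ⟨c1, c2⟩
      exact absurd ((um c1).trans (uv c2).symm) (by simp)
    · rintro ⟨c1, c2⟩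
      have heq := (u0 c1).trans (up c2).symm
      simp only [Sum.inr.injEq] at heq
      exact hk0 ((left_eq_add).mp heq)
    · rintro ⟨c1, c2⟩
      exact absurd ((u0 c1).trans (uv c2).symm) (by simp)
    · rintro ⟨c1, c2⟩
      exact absurd ((up c1).trans (uv c2).symm) (by simp)

end glue2

section glue3
variable {n k : ℕ}

/-- If 2k ≡ 0 (mod n) (with k ≢ 0), there is no perfect code. -/
lemma case2k0 (hn : 3 ≤ n) (hk0 : (k:ZMod n) ≠ 0)
    (hzz : (k:ZMod n) + (k:ZMod n) = 0)
    {C : Set (ZMod n ⊕ ZMod n)} (h : IsPerfectCode (GP n k) C) : False := by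
  classical
  have h1 := zmod_one_ne_zero hn
  set z : ZMod n := (k : ZMod n) with hzdef
  set A : ZMod n → ℕ := fun i => if Sum.inl i ∈ C then 1 else 0 with hAdef
  set B : ZMod n → ℕ := fun i => if Sum.inr i ∈ C then 1 else 0 with hBdef
  have hA : ∀ i, A i ≤ 1 := fun i => by dsimp [A]; split <;> omega
  have hB : ∀ i, B i ≤ 1 := fun i => by dsimp [B]; split <;> omega
  have hmz : ∀ i : ZMod n, i - z = i + z := by
    intro i
    rw [sub_eq_add_neg, neg_eq_of_add_eq_zero_right hzz]
  -- E1
  have E1 : ∀ i, A (i-1) + A i + A (i+1) + B i = 1 := by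
    intro i
    obtain ⟨y, ⟨hyC, hyN⟩, hu⟩ := key h (Sum.inl i)
    rw [nbhd_outer h1] at hyN
    have u0 : Sum.inl i ∈ C → Sum.inl i = y := fun hc =>
      hu _ ⟨hc, (nbhd_outer h1 i _).mpr (Or.inl rfl)⟩
    have um : Sum.inl (i-1) ∈ C → Sum.inl (i-1) = y := fun hc =>
      hu _ ⟨hc, (nbhd_outer h1 i _).mpr (Or.inr (Or.inl rfl))⟩
    have up : Sum.inl (i+1) ∈ C → Sum.inl (i+1) = y := fun hc =>
      hu _ ⟨hc, (nbhd_outer h1 i _).mpr (Or.inr (Or.inr (Or.inl rfl)))⟩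
    have uv : Sum.inr i ∈ C → Sum.inr i = y := fun hc =>
      hu _ ⟨hc, (nbhd_outer h1 i _).mpr (Or.inr (Or.inr (Or.inr rfl)))⟩
    dsimp only [A, B]
    apply indicator_sum
    · rcases hyN with rfl | rfl | rfl | rfl
      · exact Or.inr (Or.inl hyC)
      · exact Or.inl hyC
      · exact Or.inr (Or.inr (Or.inl hyC))
      · exact Or.inr (Or.inr (Or.inr hyC))
    · rintro ⟨c1, c2⟩
      have heq := (um c1).trans (u0 c2).symm
      simp only [Sum.inl.injEq] at heq
      exact h1 (sub_eq_self.mp heq)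
    · rintro ⟨c1, c2⟩
      have heq := (um c1).trans (up c2).symm
      simp only [Sum.inl.injEq] at heq
      exact zmod_two_ne_zero hn (by linear_combination -heq)
    · rintro ⟨c1, c2⟩
      exact absurd ((um c1).trans (uv c2).symm) (by simp)
    · rintro ⟨c1, c2⟩
      have heq := (u0 c1).trans (up c2).symm
      simp only [Sum.inl.injEq] at heq
      exact h1 ((left_eq_add).mp heq)
    · rintro ⟨c1, c2⟩
      exact absurd ((u0 c1).trans (uv c2).symm) (by simp)
    · rintro ⟨c1, c2⟩
      exact absurd ((up c1).trans (uv c2).symm) (by simp)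
  -- E2'' : A i + B i + B (i+z) = 1
  have E2 : ∀ i, A i + B i + B (i+z) = 1 := by
    intro i
    obtain ⟨y, ⟨hyC, hyN⟩, hu⟩ := key h (Sum.inr i)
    rw [nbhd_inner hk0, hmz i, or_self_left] at hyN
    have u0 : Sum.inr i ∈ C → Sum.inr i = y := fun hc =>
      hu _ ⟨hc, (nbhd_inner hk0 i _).mpr (Or.inl rfl)⟩
    have up : Sum.inr (i+z) ∈ C → Sum.inr (i+z) = y := fun hc =>
      hu _ ⟨hc, (nbhd_inner hk0 i _).mpr (Or.inr (Or.inr (Or.inl rfl)))⟩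
    have uv : Sum.inl i ∈ C → Sum.inl i = y := fun hc =>
      hu _ ⟨hc, (nbhd_inner hk0 i _).mpr (Or.inr (Or.inr (Or.inr rfl)))⟩
    dsimp only [A, B]
    apply indicator_sum3
    · rcases hyN with rfl | rfl | rfl
      · exact Or.inr (Or.inl hyC)
      · exact Or.inr (Or.inr hyC)
      · exact Or.inl hyC
    · rintro ⟨c1, c2⟩
      exact absurd ((uv c1).trans (u0 c2).symm) (by simp)
    · rintro ⟨c1, c2⟩
      exact absurd ((uv c1).trans (up c2).symm) (by simp)
    · rintro ⟨c1, c2⟩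
      have heq := (u0 c1).trans (up c2).symm
      simp only [Sum.inr.injEq] at heq
      exact hk0 ((left_eq_add).mp heq)
  -- now derive the contradiction
  have hT : ∃ t, A t = 1 := by
    by_contra hc
    push_neg at hc
    have hB1 : ∀ i, B i = 1 := by
      intro i
      have e := E1 i
      have := hA (i-1); have := hA i; have := hA (i+1); have := hB i
      have := hc (i-1); have := hc i; have := hc (i+1)
      omega
    have := E2 0
    have := hB1 0; have := hB1 (0 + z); have := hA 0
    omega
  obtain ⟨t, ht⟩ := hT
  have e0 := E2 t
  have hBt : B t = 0 ∧ B (t+z) = 0 := by have := hB t; have := hB (t+z); omega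
  have e1 := E2 (t+z)
  rw [show t + z + z = t by rw [add_assoc, hzz, add_zero]] at e1
  have hAtz : A (t+z) = 1 := by have := hA (t+z); omega
  have e2 := E1 (t+1)
  rw [show t + 1 - 1 = t by ring] at e2
  have hA1 : A (t+1) = 0 ∧ B (t+1) = 0 := by
    have := hA (t+1); have := hB (t+1); have := hA (t+1+1); omega
  have e3 := E2 (t+1)
  have hB1z : B (t+1+z) = 1 := by have := hB (t+1+z); omega
  have e4 := E1 (t+z+1)
  rw [show t + z + 1 - 1 = t + z by ring] at e4
  rw [show t + 1 + z = t + z + 1 by ring] at hB1z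
  have := hA (t+z+1); have := hA (t+z+1+1); have := hB (t+z+1)
  omega

end glue3

section glue4
variable {n k : ℕ}

lemma forward (hn : 3 ≤ n) (hk0 : (k:ZMod n) ≠ 0)
    {C : Set (ZMod n ⊕ ZMod n)} (h : IsPerfectCode (GP n k) C) :
    n % 4 = 0 ∧ k % 2 = 1 ∧ ∃ j : ℕ, j < 4 ∧
      C = {x | ∃ i : ZMod n, x = .inl (4 * i + (j : ZMod n)) ∨
        x = .inr (4 * i + (j : ZMod n) + 2)} := by
  haveI : NeZero n := ⟨by omega⟩
  by_cases hzz : (k:ZMod n) + (k:ZMod n) = 0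
  · exact (case2k0 hn hk0 hzz h).elim
  obtain ⟨D, hz, chA, chB⟩ := extract hn hk0 hzz h
  have hT : ∃ t, D.A t = 1 := by
    by_contra hc
    push_neg at hc
    have hB1 : ∀ i, D.B i = 1 := by
      intro i
      have e := D.E1 i
      have := D.hA (i-1); have := D.hA i; have := D.hA (i+1); have := D.hB i
      have := hc (i-1); have := hc i; have := hc (i+1)
      omega
    exact D.Ladj 0 (hB1 0) (hB1 (0+1))
  obtain ⟨t0, ht0⟩ := hT
  have pat := D.L5 t0 ht0
  have hn4 : n % 4 = 0 := by
    have hp := (pat n).1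
    rw [ZMod.natCast_self, add_zero] at hp
    by_cases hc : n % 4 = 0
    · exact hc
    · rw [if_neg hc] at hp; omega
  have hval : ∀ x : ZMod n, ((x.val:ℕ) : ZMod n) = x := fun x => by
    rw [ZMod.natCast_val, ZMod.cast_id]
  have chA' : ∀ a : ZMod n, (D.A a = 1 ↔ (a - t0).val % 4 = 0) := by
    intro a
    have hp := (pat ((a - t0).val)).1
    rw [hval, show t0 + (a - t0) = a by ring] at hp
    constructor
    · intro hA; by_contra hc; rw [if_neg hc] at hp; omega
    · intro hc; rw [if_pos hc] at hp; exact hp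
  have chB' : ∀ a : ZMod n, (D.B a = 1 ↔ (a - t0).val % 4 = 2) := by
    intro a
    have hp := (pat ((a - t0).val)).2
    rw [hval, show t0 + (a - t0) = a by ring] at hp
    constructor
    · intro hB
      by_contra hc
      rw [if_neg (by omega : ¬ ((a - t0).val % 4 = 2))] at hp; omega
    · intro hc; rw [if_pos hc] at hp; exact hp
  set π := ZMod.castHom (show (4:ℕ) ∣ n from Nat.dvd_of_mod_eq_zero hn4) (ZMod 4) with hπ
  have bridge : ∀ x : ZMod n, (π x).val = x.val % 4 := by
    intro x
    conv_lhs => rw [← hval x]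
    rw [map_natCast, ZMod.val_natCast]
  have val4inj : ∀ x y : ZMod 4, x.val = y.val → x = y := by decide
  -- k % 2 = 1
  have pA1 : D.A (t0+1) = 0 := by
    have hp := (pat 1).1
    rw [Nat.cast_one] at hp
    norm_num at hp
    exact hp
  have pB1 : D.B (t0+1) = 0 := by
    have hp := (pat 1).2
    rw [Nat.cast_one] at hp
    norm_num at hp
    exact hp
  have hk4 : k % 4 = 1 ∨ k % 4 = 3 := by
    have e := D.E2 (t0+1)
    rw [hz] at e
    have hc : D.B (t0+1-(k:ZMod n)) = 1 ∨ D.B (t0+1+(k:ZMod n)) = 1 := by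
      have := D.hB (t0+1-(k:ZMod n)); have := D.hB (t0+1+(k:ZMod n)); omega
    have hvk := ZMod.val_natCast (n := 4) k
    rcases hc with hcm | hcp
    · right
      have hd := (chB' _).mp hcm
      have hπ2 : π (t0+1-(k:ZMod n) - t0) = 2 := by
        apply val4inj
        rw [bridge, hd]
        rfl
      rw [show t0+1-(k:ZMod n)-t0 = 1 - ((k:ℕ):ZMod n) by ring, map_sub, map_one,
        map_natCast] at hπ2
      have hκ : ((k:ℕ):ZMod 4) = 3 := by
        have h13 : ((k:ℕ):ZMod 4) = 1 - 2 := by linear_combination -hπ2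
        rw [h13]; decide
      rw [hκ] at hvk
      have : (3:ZMod 4).val = 3 := rfl
      omega
    · left
      have hd := (chB' _).mp hcp
      have hπ2 : π (t0+1+(k:ZMod n) - t0) = 2 := by
        apply val4inj
        rw [bridge, hd]
        rfl
      rw [show t0+1+(k:ZMod n)-t0 = 1 + ((k:ℕ):ZMod n) by ring, map_add, map_one,
        map_natCast] at hπ2
      have hκ : ((k:ℕ):ZMod 4) = 1 := by linear_combination hπ2
      rw [hκ] at hvk
      have : (1:ZMod 4).val = 1 := rfl
      omega
  refine ⟨hn4, by omega, t0.val % 4, by omega, ?_⟩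
  have hπt0 : π t0 = ((t0.val % 4 : ℕ) : ZMod 4) := by
    apply val4inj
    rw [bridge, ZMod.val_natCast]
    omega
  have h40 : (4 : ZMod 4) = 0 := by decide
  ext x
  simp only [Set.mem_setOf_eq]
  rcases x with a | a
  · simp only [Sum.inl.injEq, reduceCtorEq, or_false]
    constructor
    · intro hmem
      obtain ⟨d, hdval, hd0⟩ : ∃ d:ℕ, ((d:ℕ):ZMod n) = a - t0 ∧ d % 4 = 0 :=
        ⟨(a - t0).val, hval _, (chA' a).mp ((chA a).mpr hmem)⟩
      refine ⟨((t0.val / 4 + d / 4 : ℕ) : ZMod n), ?_⟩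
      have ha : a = ((t0.val + d : ℕ) : ZMod n) := by
        push_cast
        rw [hval t0, hdval]
        ring
      rw [ha, show (t0.val + d) = 4*(t0.val/4 + d/4) + t0.val % 4 from by omega]
      push_cast
      ring
    · rintro ⟨i, rfl⟩
      refine (chA _).mp ((chA' _).mpr ?_)
      have : π (4*i + ((t0.val % 4 : ℕ):ZMod n) - t0) = 0 := by
        rw [map_sub, map_add, map_mul, map_natCast, hπt0, map_ofNat, h40]
        ring
      rw [← bridge, this]
      rfl
  · simp only [Sum.inr.injEq, reduceCtorEq, false_or]
    constructor
    · intro hmem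
      obtain ⟨d, hdval, hd0⟩ : ∃ d:ℕ, ((d:ℕ):ZMod n) = a - t0 ∧ d % 4 = 2 :=
        ⟨(a - t0).val, hval _, (chB' a).mp ((chB a).mpr hmem)⟩
      refine ⟨((t0.val / 4 + d / 4 : ℕ) : ZMod n), ?_⟩
      have ha : a = ((t0.val + d : ℕ) : ZMod n) := by
        push_cast
        rw [hval t0, hdval]
        ring
      rw [ha, show (t0.val + d) = 4*(t0.val/4 + d/4) + t0.val % 4 + 2 from by omega]
      push_cast
      ring
    · rintro ⟨i, rfl⟩
      refine (chB _).mp ((chB' _).mpr ?_)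
      have : π (4*i + ((t0.val % 4 : ℕ):ZMod n) + 2 - t0) = 2 := by
        rw [map_sub, map_add, map_add, map_mul, map_natCast, hπt0, map_ofNat,
          map_ofNat, h40]
        ring
      rw [← bridge, this]
      rfl

end glue4

section glue5
variable {n k : ℕ}

lemma jneq (v c1 c2 : ZMod 4) (hne : c1 ≠ c2) (h : v + c1 = v + c2) : False :=
  hne (by linear_combination h)

lemma backward (hn : 3 ≤ n) (hk0 : (k:ZMod n) ≠ 0) (hn4 : n % 4 = 0) (hk2 : k % 2 = 1)
    (j : ℕ) (hj : j < 4) :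
    IsPerfectCode (GP n k)
      {x | ∃ i : ZMod n, x = .inl (4 * i + (j:ZMod n)) ∨
        x = .inr (4 * i + (j:ZMod n) + 2)} := by
  haveI : NeZero n := ⟨by omega⟩
  set C : Set (ZMod n ⊕ ZMod n) := {x | ∃ i : ZMod n, x = .inl (4 * i + (j:ZMod n)) ∨
      x = .inr (4 * i + (j:ZMod n) + 2)} with hC
  have h1 := zmod_one_ne_zero hn
  set π := ZMod.castHom (show (4:ℕ) ∣ n from Nat.dvd_of_mod_eq_zero hn4) (ZMod 4) with hπ
  have hval : ∀ x : ZMod n, ((x.val:ℕ) : ZMod n) = x := fun x => by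
    rw [ZMod.natCast_val, ZMod.cast_id]
  have bridge : ∀ x : ZMod n, (π x).val = x.val % 4 := by
    intro x
    conv_lhs => rw [← hval x]
    rw [map_natCast, ZMod.val_natCast]
  have val4inj : ∀ x y : ZMod 4, x.val = y.val → x = y := by decide
  have h40 : (4 : ZMod 4) = 0 := by decide
  have hvk := ZMod.val_natCast (n := 4) k
  have hκ : ((k:ℕ):ZMod 4) = 1 ∨ ((k:ℕ):ZMod 4) = 3 := by
    have hk4 : k % 4 = 1 ∨ k % 4 = 3 := by omega
    rcases hk4 with h | h
    · exact Or.inl (val4inj _ _ (by rw [hvk, h]; rfl))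
    · exact Or.inr (val4inj _ _ (by rw [hvk, h]; rfl))
  have hz2 : (k:ZMod n) + (k:ZMod n) ≠ 0 := by
    intro hc
    have : ((k:ℕ):ZMod 4) + ((k:ℕ):ZMod 4) = 0 := by
      have := congrArg π hc
      rwa [map_add, map_natCast, map_zero] at this
    rcases hκ with h | h <;> rw [h] at this <;> exact absurd this (by decide)
  have memL : ∀ a : ZMod n, (Sum.inl a ∈ C ↔ π a = ((j:ℕ) : ZMod 4)) := by
    intro a
    constructor
    · rintro ⟨i, hi | hi⟩
      · simp only [Sum.inl.injEq] at hi
        rw [hi, map_add, map_mul, map_natCast, map_ofNat, h40]; ring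
      · exact absurd hi (by simp)
    · intro ha
      obtain ⟨d, hvd, hd⟩ : ∃ d : ℕ, ((d:ℕ):ZMod n) = a - ((j:ℕ):ZMod n) ∧ d % 4 = 0 := by
        refine ⟨(a - ((j:ℕ):ZMod n)).val, hval _, ?_⟩
        have hp : π (a - ((j:ℕ):ZMod n)) = 0 := by rw [map_sub, map_natCast, ha]; ring
        rw [← bridge, hp]; rfl
      refine ⟨((d / 4 : ℕ) : ZMod n), Or.inl (congrArg Sum.inl ?_)⟩
      have ha2 : a = ((j:ℕ):ZMod n) + ((d:ℕ) : ZMod n) := by rw [hvd]; ring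
      conv_lhs => rw [ha2, show d = 4*(d/4) from by omega]
      push_cast; ring
  have memR : ∀ a : ZMod n, (Sum.inr a ∈ C ↔ π a = ((j:ℕ) : ZMod 4) + 2) := by
    intro a
    constructor
    · rintro ⟨i, hi | hi⟩
      · exact absurd hi (by simp)
      · simp only [Sum.inr.injEq] at hi
        rw [hi, map_add, map_add, map_mul, map_natCast, map_ofNat, map_ofNat, h40]; ring
    · intro ha
      obtain ⟨d, hvd, hd⟩ : ∃ d : ℕ, ((d:ℕ):ZMod n) = a - ((j:ℕ):ZMod n) - 2 ∧
          d % 4 = 0 := by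
        refine ⟨(a - ((j:ℕ):ZMod n) - 2).val, hval _, ?_⟩
        have hp : π (a - ((j:ℕ):ZMod n) - 2) = 0 := by
          rw [map_sub, map_sub, map_natCast, map_ofNat, ha]; ring
        rw [← bridge, hp]; rfl
      refine ⟨((d / 4 : ℕ) : ZMod n), Or.inr (congrArg Sum.inr ?_)⟩
      have ha2 : a = ((j:ℕ):ZMod n) + ((d:ℕ) : ZMod n) + 2 := by rw [hvd]; ring
      conv_lhs => rw [ha2, show d = 4*(d/4) from by omega]
      push_cast; ring
  constructor
  · -- independence
    rintro (a | a) hx (b | b) hy hadj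
    · obtain ⟨hne, hb | hb⟩ := (show a ≠ b ∧ (b = a + 1 ∨ a = b + 1) from hadj)
      · have hpa := (memL a).mp hx
        have hpb := (memL b).mp hy
        rw [hb, map_add, map_one, hpa] at hpb
        exact jneq _ 1 0 (by decide) (by linear_combination hpb)
      · have hpa := (memL a).mp hx
        have hpb := (memL b).mp hy
        rw [hb, map_add, map_one, hpb] at hpa
        exact jneq _ 1 0 (by decide) (by linear_combination hpa)
    · have hab : a = b := hadj
      have hpa := (memL a).mp hx
      have hpb := (memR b).mp hy
      rw [← hab, hpa] at hpb
      exact jneq _ 0 2 (by decide) (by linear_combination hpb)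
    · have hab : a = b := hadj
      have hpa := (memR a).mp hx
      have hpb := (memL b).mp hy
      rw [← hab, hpa] at hpb
      exact jneq _ 2 0 (by decide) (by linear_combination hpb)
    · obtain ⟨hne, hb | hb⟩ :=
        (show a ≠ b ∧ (b = a + (k:ZMod n) ∨ a = b + (k:ZMod n)) from hadj)
      · have hpa := (memR a).mp hx
        have hpb := (memR b).mp hy
        rw [hb, map_add, map_natCast, hpa] at hpb
        rcases hκ with h | h <;> rw [h] at hpb
        · exact jneq _ 3 2 (by decide) (by linear_combination hpb)
        · exact jneq _ 1 2 (by decide) (by linear_combination hpb - h40)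
      · have hpa := (memR a).mp hx
        have hpb := (memR b).mp hy
        rw [hb, map_add, map_natCast, hpb] at hpa
        rcases hκ with h | h <;> rw [h] at hpa
        · exact jneq _ 3 2 (by decide) (by linear_combination hpa)
        · exact jneq _ 1 2 (by decide) (by linear_combination hpa - h40)
  · -- existence and uniqueness
    rintro (a | a) hx
    · have he : π a = ((j:ℕ):ZMod 4) + 1 ∨ π a = ((j:ℕ):ZMod 4) + 2 ∨
          π a = ((j:ℕ):ZMod 4) + 3 := by
        have hall : ∀ u v : ZMod 4, u = v ∨ u = v + 1 ∨ u = v + 2 ∨ u = v + 3 := by decide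
        rcases hall (π a) ((j:ℕ):ZMod 4) with h|h|h|h
        · exact absurd ((memL a).mpr h) hx
        · exact Or.inl h
        · exact Or.inr (Or.inl h)
        · exact Or.inr (Or.inr h)
      rcases he with he | he | he
      · -- y = inl (a - 1)
        refine ⟨Sum.inl (a-1), ⟨(memL _).mpr (by rw [map_sub, map_one, he]; ring), ?_⟩, ?_⟩
        · exact show a ≠ a - 1 ∧ (a - 1 = a + 1 ∨ a = a - 1 + 1) from
            ⟨fun hc => h1 (by linear_combination hc), Or.inr (by ring)⟩
        · rintro (b | b) ⟨hyC, hyA⟩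
          · obtain ⟨hne, hb | hb⟩ := (show a ≠ b ∧ (b = a + 1 ∨ a = b + 1) from hyA)
            · exfalso
              have hpb := (memL b).mp hyC
              rw [hb, map_add, map_one, he] at hpb
              exact jneq _ 2 0 (by decide) (by linear_combination hpb)
            · exact congrArg Sum.inl (eq_sub_of_add_eq hb.symm)
          · exfalso
            have hab : a = b := hyA
            have hpb := (memR b).mp hyC
            rw [← hab, he] at hpb
            exact jneq _ 1 2 (by decide) (by linear_combination hpb)
      · -- y = inr a
        refine ⟨Sum.inr a, ⟨(memR _).mpr he, show a = a from rfl⟩, ?_⟩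
        rintro (b | b) ⟨hyC, hyA⟩
        · exfalso
          obtain ⟨hne, hb | hb⟩ := (show a ≠ b ∧ (b = a + 1 ∨ a = b + 1) from hyA)
          · have hpb := (memL b).mp hyC
            rw [hb, map_add, map_one, he] at hpb
            exact jneq _ 3 0 (by decide) (by linear_combination hpb)
          · have hpb := (memL b).mp hyC
            rw [hb, map_add, map_one, hpb] at he
            exact jneq _ 1 2 (by decide) (by linear_combination he)
        · exact congrArg Sum.inr (show a = b from hyA).symm
      · -- y = inl (a + 1)
        refine ⟨Sum.inl (a+1), ⟨(memL _).mpr (by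
          rw [map_add, map_one, he]; linear_combination h40), ?_⟩, ?_⟩
        · exact show a ≠ a + 1 ∧ (a + 1 = a + 1 ∨ a = a + 1 + 1) from
            ⟨fun hc => h1 (left_eq_add.mp hc), Or.inl rfl⟩
        · rintro (b | b) ⟨hyC, hyA⟩
          · obtain ⟨hne, hb | hb⟩ := (show a ≠ b ∧ (b = a + 1 ∨ a = b + 1) from hyA)
            · exact congrArg Sum.inl hb
            · exfalso
              have hpb := (memL b).mp hyC
              rw [hb, map_add, map_one, hpb] at he
              exact jneq _ 1 3 (by decide) (by linear_combination he)
          · exfalso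
            have hab : a = b := hyA
            have hpb := (memR b).mp hyC
            rw [← hab, he] at hpb
            exact jneq _ 3 2 (by decide) (by linear_combination hpb)
    · have he : π a = ((j:ℕ):ZMod 4) ∨ π a = ((j:ℕ):ZMod 4) + 1 ∨
          π a = ((j:ℕ):ZMod 4) + 3 := by
        have hall : ∀ u v : ZMod 4, u = v ∨ u = v + 1 ∨ u = v + 2 ∨ u = v + 3 := by decide
        rcases hall (π a) ((j:ℕ):ZMod 4) with h|h|h|h
        · exact Or.inl h
        · exact Or.inr (Or.inl h)
        · exact absurd ((memR a).mpr h) hx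
        · exact Or.inr (Or.inr h)
      rcases he with he | he | he
      · -- y = inl a
        refine ⟨Sum.inl a, ⟨(memL _).mpr he, show a = a from rfl⟩, ?_⟩
        rintro (b | b) ⟨hyC, hyA⟩
        · exact congrArg Sum.inl (show a = b from hyA).symm
        · exfalso
          obtain ⟨hne, hb | hb⟩ :=
            (show a ≠ b ∧ (b = a + (k:ZMod n) ∨ a = b + (k:ZMod n)) from hyA)
          · have hpb := (memR b).mp hyC
            rw [hb, map_add, map_natCast, he] at hpb
            rcases hκ with h | h <;> rw [h] at hpb
            · exact jneq _ 1 2 (by decide) (by linear_combination hpb)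
            · exact jneq _ 3 2 (by decide) (by linear_combination hpb)
          · have hpb := (memR b).mp hyC
            rw [hb, map_add, map_natCast, hpb] at he
            rcases hκ with h | h <;> rw [h] at he
            · exact jneq _ 0 3 (by decide) (by linear_combination -he)
            · exact jneq _ 0 1 (by decide) (by linear_combination -he + h40)
      · -- π a = j + 1
        rcases hκ with hκ1 | hκ1
        · -- k ≡ 1 : y = inr (a + k)
          refine ⟨Sum.inr (a + (k:ZMod n)), ⟨(memR _).mpr (by
            rw [map_add, map_natCast, he, hκ1]; ring), ?_⟩, ?_⟩
          · exact show a ≠ a + (k:ZMod n) ∧ (a + (k:ZMod n) = a + (k:ZMod n) ∨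
              a = a + (k:ZMod n) + (k:ZMod n)) from
              ⟨fun hc => hk0 (left_eq_add.mp hc), Or.inl rfl⟩
          · rintro (b | b) ⟨hyC, hyA⟩
            · exfalso
              have hab : a = b := hyA
              have hpb := (memL b).mp hyC
              rw [← hab, he] at hpb
              exact jneq _ 1 0 (by decide) (by linear_combination hpb)
            · obtain ⟨hne, hb | hb⟩ :=
                (show a ≠ b ∧ (b = a + (k:ZMod n) ∨ a = b + (k:ZMod n)) from hyA)
              · exact congrArg Sum.inr hb
              · exfalso
                have hpb := (memR b).mp hyC
                rw [hb, map_add, map_natCast, hpb, hκ1] at he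
                exact jneq _ 1 3 (by decide) (by linear_combination -he)
        · -- k ≡ 3 : y = inr (a - k)
          refine ⟨Sum.inr (a - (k:ZMod n)), ⟨(memR _).mpr (by
            rw [map_sub, map_natCast, he, hκ1]; linear_combination -h40), ?_⟩, ?_⟩
          · exact show a ≠ a - (k:ZMod n) ∧ (a - (k:ZMod n) = a + (k:ZMod n) ∨
              a = a - (k:ZMod n) + (k:ZMod n)) from
              ⟨fun hc => hk0 (by linear_combination hc), Or.inr (by ring)⟩
          · rintro (b | b) ⟨hyC, hyA⟩
            · exfalso
              have hab : a = b := hyA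
              have hpb := (memL b).mp hyC
              rw [← hab, he] at hpb
              exact jneq _ 1 0 (by decide) (by linear_combination hpb)
            · obtain ⟨hne, hb | hb⟩ :=
                (show a ≠ b ∧ (b = a + (k:ZMod n) ∨ a = b + (k:ZMod n)) from hyA)
              · exfalso
                have hpb := (memR b).mp hyC
                rw [hb, map_add, map_natCast, he, hκ1] at hpb
                exact jneq _ 0 2 (by decide) (by linear_combination hpb - h40)
              · exact congrArg Sum.inr (eq_sub_of_add_eq hb.symm)
      · -- π a = j + 3
        rcases hκ with hκ1 | hκ1
        · -- k ≡ 1 : y = inr (a - k)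
          refine ⟨Sum.inr (a - (k:ZMod n)), ⟨(memR _).mpr (by
            rw [map_sub, map_natCast, he, hκ1]; ring), ?_⟩, ?_⟩
          · exact show a ≠ a - (k:ZMod n) ∧ (a - (k:ZMod n) = a + (k:ZMod n) ∨
              a = a - (k:ZMod n) + (k:ZMod n)) from
              ⟨fun hc => hk0 (by linear_combination hc), Or.inr (by ring)⟩
          · rintro (b | b) ⟨hyC, hyA⟩
            · exfalso
              have hab : a = b := hyA
              have hpb := (memL b).mp hyC
              rw [← hab, he] at hpb
              exact jneq _ 3 0 (by decide) (by linear_combination hpb)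
            · obtain ⟨hne, hb | hb⟩ :=
                (show a ≠ b ∧ (b = a + (k:ZMod n) ∨ a = b + (k:ZMod n)) from hyA)
              · exfalso
                have hpb := (memR b).mp hyC
                rw [hb, map_add, map_natCast, he, hκ1] at hpb
                exact jneq _ 0 2 (by decide) (by linear_combination hpb - h40)
              · exact congrArg Sum.inr (eq_sub_of_add_eq hb.symm)
        · -- k ≡ 3 : y = inr (a + k)
          refine ⟨Sum.inr (a + (k:ZMod n)), ⟨(memR _).mpr (by
            rw [map_add, map_natCast, he, hκ1]; linear_combination h40), ?_⟩, ?_⟩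
          · exact show a ≠ a + (k:ZMod n) ∧ (a + (k:ZMod n) = a + (k:ZMod n) ∨
              a = a + (k:ZMod n) + (k:ZMod n)) from
              ⟨fun hc => hk0 (left_eq_add.mp hc), Or.inl rfl⟩
          · rintro (b | b) ⟨hyC, hyA⟩
            · exfalso
              have hab : a = b := hyA
              have hpb := (memL b).mp hyC
              rw [← hab, he] at hpb
              exact jneq _ 3 0 (by decide) (by linear_combination hpb)
            · obtain ⟨hne, hb | hb⟩ :=
                (show a ≠ b ∧ (b = a + (k:ZMod n) ∨ a = b + (k:ZMod n)) from hyA)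
              · exact congrArg Sum.inr hb
              · exfalso
                have hpb := (memR b).mp hyC
                rw [hb, map_add, map_natCast, hpb, hκ1] at he
                exact jneq _ 3 1 (by decide) (by linear_combination he)

end glue5

/-- Theorem 1.1: C is a perfect code in GP(n,k) iff n ≡ 0 (mod 4), k ≡ 1 (mod 2),
and C = {u_{4i+j}, v_{4i+j+2} : i ∈ ℤ_n} for some j ∈ {0,1,2,3}. -/
theorem stmt_7 (n k : ℕ) (hn : 3 ≤ n) (hk0 : (k : ZMod n) ≠ 0)
    (C : Set (ZMod n ⊕ ZMod n)) :
    IsPerfectCode (GP n k) C ↔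
      n % 4 = 0 ∧ k % 2 = 1 ∧ ∃ j : ℕ, j < 4 ∧
        C = {x | ∃ i : ZMod n, x = .inl (4 * i + (j : ZMod n)) ∨
          x = .inr (4 * i + (j : ZMod n) + 2)} := by
  constructor
  · intro h
    exact forward hn hk0 h
  · rintro ⟨hn4, hk2, j, hj, rfl⟩
    exact backward hn hk0 hn4 hk2 j hj
end

section
/- Let C be a total perfect code in GP(n,k). If some edge of the outer cycle has both endpoints in C (i.e., u_ℓ, u_{ℓ+1} ∈ C for some ℓ), then no spoke edge has both endpoints in C (i.e., there is no m with u_m ∈ C and v_m ∈ C). -/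
/-- Lemma 4.3: if a total perfect code C in GP(n,k) contains both endpoints of
an outer edge, then it contains both endpoints of no spoke. -/
theorem stmt_11 (n k : ℕ) (hn : 3 ≤ n) (hk0 : (k : ZMod n) ≠ 0)
    (C : Set (ZMod n ⊕ ZMod n)) (hC : IsTotalPerfectCode (GP n k) C)
    (h : ∃ l : ZMod n, Sum.inl l ∈ C ∧ Sum.inl (l + 1) ∈ C) :
    ∀ m : ZMod n, ¬ (Sum.inl m ∈ C ∧ Sum.inr m ∈ C) := by
  intro m hm
  obtain ⟨hum, hvm⟩ := hm
  classical
  haveI : NeZero n := ⟨by omega⟩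
  have h1 : (1 : ZMod n) ≠ 0 := by
    intro hh
    have hd : (n : ℕ) ∣ 1 := (ZMod.natCast_eq_zero_iff 1 n).mp (by exact_mod_cast hh)
    have := Nat.le_of_dvd one_pos hd
    omega
  have h2 : (2 : ZMod n) ≠ 0 := by
    intro hh
    have hd : (n : ℕ) ∣ 2 := (ZMod.natCast_eq_zero_iff 2 n).mp (by exact_mod_cast hh)
    have := Nat.le_of_dvd two_pos hd
    omega
  set F : ZMod n → ℕ := fun i => if Sum.inl i ∈ C then 1 else 0 with hF
  set G : ZMod n → ℕ := fun i => if Sum.inr i ∈ C then 1 else 0 with hG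
  have hne1 : ∀ i : ZMod n, i ≠ i + 1 := by
    intro i hh
    exact h1 (by linear_combination -hh)
  have hnem1 : ∀ i : ZMod n, i ≠ i - 1 := by
    intro i hh
    exact h1 (by linear_combination hh)
  -- outer equations
  have hexO : ∀ i : ZMod n, F (i - 1) + F (i + 1) + G i = 1 := by
    intro i
    obtain ⟨y, ⟨hyC, hyA⟩, hyU⟩ := hC (Sum.inl i)
    have e1 : Sum.inl (i + 1) ∈ C → (Sum.inl (i + 1) : ZMod n ⊕ ZMod n) = y := by
      intro hh
      exact hyU _ ⟨hh, ⟨hne1 i, Or.inl rfl⟩⟩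
    have e2 : Sum.inl (i - 1) ∈ C → (Sum.inl (i - 1) : ZMod n ⊕ ZMod n) = y := by
      intro hh
      exact hyU _ ⟨hh, ⟨hnem1 i, Or.inr (by ring)⟩⟩
    have e3 : Sum.inr i ∈ C → (Sum.inr i : ZMod n ⊕ ZMod n) = y := by
      intro hh
      exact hyU _ ⟨hh, rfl⟩
    have k12 : Sum.inl (i - 1) ∈ C → Sum.inl (i + 1) ∈ C → False := by
      intro a b
      have hq : (Sum.inl (i - 1) : ZMod n ⊕ ZMod n) = Sum.inl (i + 1) := (e2 a).trans (e1 b).symm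
      have : (i - 1 : ZMod n) = i + 1 := by injection hq
      exact h2 (by linear_combination -this)
    have k13 : Sum.inl (i - 1) ∈ C → Sum.inr i ∈ C → False := by
      intro a b
      have hq : (Sum.inl (i - 1) : ZMod n ⊕ ZMod n) = Sum.inr i := (e2 a).trans (e3 b).symm
      exact absurd hq (by simp)
    have k23 : Sum.inl (i + 1) ∈ C → Sum.inr i ∈ C → False := by
      intro a b
      have hq : (Sum.inl (i + 1) : ZMod n ⊕ ZMod n) = Sum.inr i := (e1 a).trans (e3 b).symm
      exact absurd hq (by simp)
    have hat : Sum.inl (i - 1) ∈ C ∨ Sum.inl (i + 1) ∈ C ∨ Sum.inr i ∈ C := by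
      rcases y with j | j
      · obtain ⟨hij, hj⟩ := hyA
        rcases hj with hj | hj
        · right; left; rw [hj] at hyC; exact hyC
        · left
          have : j = i - 1 := by linear_combination -hj
          rw [this] at hyC; exact hyC
      · right; right
        have : (j : ZMod n) = i := by exact hyA.symm
        rw [this] at hyC; exact hyC
    rcases hat with a | a | a
    · simp only [hF, hG]
      rw [if_pos a, if_neg (fun b => k12 a b), if_neg (fun b => k13 a b)]
    · simp only [hF, hG]
      rw [if_neg (fun b => k12 b a), if_pos a, if_neg (fun b => k23 a b)]
    · simp only [hF, hG]
      rw [if_neg (fun b => k13 b a), if_neg (fun b => k23 b a), if_pos a]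
  -- k ≠ 0 facts
  have hnek : ∀ i : ZMod n, i ≠ i + k := by
    intro i hh
    exact hk0 (by linear_combination -hh)
  have hnemk : ∀ i : ZMod n, i ≠ i - k := by
    intro i hh
    exact hk0 (by linear_combination hh)
  by_cases h2k : (k : ZMod n) + k = 0
  · -- degenerate case: 2k = 0
    have hexI' : ∀ i : ZMod n, F i + G (i + k) = 1 := by
      intro i
      obtain ⟨y, ⟨hyC, hyA⟩, hyU⟩ := hC (Sum.inr i)
      have e1 : Sum.inr (i + k) ∈ C → (Sum.inr (i + k) : ZMod n ⊕ ZMod n) = y := by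
        intro hh
        exact hyU _ ⟨hh, ⟨hnek i, Or.inl rfl⟩⟩
      have e3 : Sum.inl i ∈ C → (Sum.inl i : ZMod n ⊕ ZMod n) = y := by
        intro hh
        exact hyU _ ⟨hh, rfl⟩
      have k13 : Sum.inl i ∈ C → Sum.inr (i + k) ∈ C → False := by
        intro a b
        have hq : (Sum.inl i : ZMod n ⊕ ZMod n) = Sum.inr (i + k) := (e3 a).trans (e1 b).symm
        exact absurd hq (by simp)
      have hat : Sum.inl i ∈ C ∨ Sum.inr (i + k) ∈ C := by
        rcases y with j | j
        · left
          have : (i : ZMod n) = j := hyA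
          rw [← this] at hyC; exact hyC
        · right
          obtain ⟨hij, hj⟩ := hyA
          rcases hj with hj | hj
          · rw [hj] at hyC; exact hyC
          · have : j = i + k := by linear_combination -hj - h2k
            rw [this] at hyC; exact hyC
      rcases hat with a | a
      · simp only [hF, hG]
        rw [if_pos a, if_neg (fun b => k13 a b)]
      · simp only [hF, hG]
        rw [if_neg (fun b => k13 b a), if_pos a]
    -- sums give a contradiction with any outer member; use l
    obtain ⟨l, hl, hl1⟩ := h
    have sumO : ∑ i : ZMod n, (F (i - 1) + F (i + 1) + G i) = n := by
      rw [Finset.sum_congr rfl (fun i _ => hexO i)]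
      simp [ZMod.card]
    have sumI : ∑ i : ZMod n, (F i + G (i + k)) = n := by
      rw [Finset.sum_congr rfl (fun i _ => hexI' i)]
      simp [ZMod.card]
    have shiftF : ∀ c : ZMod n, ∑ i : ZMod n, F (i + c) = ∑ i : ZMod n, F i :=
      fun c => Fintype.sum_equiv (Equiv.addRight c) _ _ (fun x => rfl)
    have shiftG : ∀ c : ZMod n, ∑ i : ZMod n, G (i + c) = ∑ i : ZMod n, G i :=
      fun c => Fintype.sum_equiv (Equiv.addRight c) _ _ (fun x => rfl)
    have e1 : ∑ i : ZMod n, (F (i - 1) + F (i + 1) + G i)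
        = ∑ i : ZMod n, F (i - 1) + ∑ i : ZMod n, F (i + 1) + ∑ i : ZMod n, G i := by
      rw [Finset.sum_add_distrib, Finset.sum_add_distrib]
    have e2' : ∑ i : ZMod n, (F i + G (i + k)) = ∑ i : ZMod n, F i + ∑ i : ZMod n, G (i + k) := by
      rw [Finset.sum_add_distrib]
    have hs1 : ∑ i : ZMod n, F (i - 1) = ∑ i : ZMod n, F i := by
      have := shiftF (-1); simpa [sub_eq_add_neg] using this
    have hs2 : ∑ i : ZMod n, F (i + 1) = ∑ i : ZMod n, F i := shiftF 1
    have hs3 : ∑ i : ZMod n, G (i + k) = ∑ i : ZMod n, G i := shiftG k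
    have hFl : F l = 1 := by simp only [hF]; rw [if_pos hl]
    have hFle : F l ≤ ∑ i : ZMod n, F i :=
      Finset.single_le_sum (f := F) (fun i _ => Nat.zero_le _) (Finset.mem_univ l)
    rw [e1, hs1, hs2] at sumO
    rw [e2', hs3] at sumI
    omega
  · -- nondegenerate: 2k ≠ 0
    have hne2k : ∀ i : ZMod n, i - k ≠ i + k := by
      intro i hh
      exact h2k (by linear_combination -hh)
    have hexI : ∀ i : ZMod n, F i + G (i - k) + G (i + k) = 1 := by
      intro i
      obtain ⟨y, ⟨hyC, hyA⟩, hyU⟩ := hC (Sum.inr i)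
      have e1 : Sum.inr (i + k) ∈ C → (Sum.inr (i + k) : ZMod n ⊕ ZMod n) = y := by
        intro hh
        exact hyU _ ⟨hh, ⟨hnek i, Or.inl rfl⟩⟩
      have e2 : Sum.inr (i - k) ∈ C → (Sum.inr (i - k) : ZMod n ⊕ ZMod n) = y := by
        intro hh
        exact hyU _ ⟨hh, ⟨hnemk i, Or.inr (by ring)⟩⟩
      have e3 : Sum.inl i ∈ C → (Sum.inl i : ZMod n ⊕ ZMod n) = y := by
        intro hh
        exact hyU _ ⟨hh, rfl⟩
      have k12 : Sum.inr (i - k) ∈ C → Sum.inr (i + k) ∈ C → False := by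
        intro a b
        have hq : (Sum.inr (i - k) : ZMod n ⊕ ZMod n) = Sum.inr (i + k) := (e2 a).trans (e1 b).symm
        have : (i - k : ZMod n) = i + k := by injection hq
        exact hne2k i this
      have k13 : Sum.inl i ∈ C → Sum.inr (i - k) ∈ C → False := by
        intro a b
        have hq : (Sum.inl i : ZMod n ⊕ ZMod n) = Sum.inr (i - k) := (e3 a).trans (e2 b).symm
        exact absurd hq (by simp)
      have k23 : Sum.inl i ∈ C → Sum.inr (i + k) ∈ C → False := by
        intro a b
        have hq : (Sum.inl i : ZMod n ⊕ ZMod n) = Sum.inr (i + k) := (e3 a).trans (e1 b).symm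
        exact absurd hq (by simp)
      have hat : Sum.inl i ∈ C ∨ Sum.inr (i - k) ∈ C ∨ Sum.inr (i + k) ∈ C := by
        rcases y with j | j
        · left
          have : (i : ZMod n) = j := hyA
          rw [← this] at hyC; exact hyC
        · obtain ⟨hij, hj⟩ := hyA
          rcases hj with hj | hj
          · right; right; rw [hj] at hyC; exact hyC
          · right; left
            have : j = i - k := by linear_combination -hj
            rw [this] at hyC; exact hyC
      rcases hat with a | a | a
      · simp only [hF, hG]
        rw [if_pos a, if_neg (fun b => k13 a b), if_neg (fun b => k23 a b)]
      · simp only [hF, hG]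
        rw [if_neg (fun b => k13 b a), if_pos a, if_neg (fun b => k12 a b)]
      · simp only [hF, hG]
        rw [if_neg (fun b => k23 b a), if_neg (fun b => k12 b a), if_pos a]
    -- global sums
    have shiftF : ∀ c : ZMod n, ∑ i : ZMod n, F (i + c) = ∑ i : ZMod n, F i :=
      fun c => Fintype.sum_equiv (Equiv.addRight c) _ _ (fun x => rfl)
    have shiftG : ∀ c : ZMod n, ∑ i : ZMod n, G (i + c) = ∑ i : ZMod n, G i :=
      fun c => Fintype.sum_equiv (Equiv.addRight c) _ _ (fun x => rfl)
    have sumO : ∑ i : ZMod n, (F (i - 1) + F (i + 1) + G i) = n := by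
      rw [Finset.sum_congr rfl (fun i _ => hexO i)]
      simp [ZMod.card]
    have sumI : ∑ i : ZMod n, (F i + G (i - k) + G (i + k)) = n := by
      rw [Finset.sum_congr rfl (fun i _ => hexI i)]
      simp [ZMod.card]
    have hs1 : ∑ i : ZMod n, F (i - 1) = ∑ i : ZMod n, F i := by
      have := shiftF (-1); simpa [sub_eq_add_neg] using this
    have hs2 : ∑ i : ZMod n, F (i + 1) = ∑ i : ZMod n, F i := shiftF 1
    have hs3 : ∑ i : ZMod n, G (i - k) = ∑ i : ZMod n, G i := by
      have := shiftG (-k); simpa [sub_eq_add_neg] using this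
    have hs4 : ∑ i : ZMod n, G (i + k) = ∑ i : ZMod n, G i := shiftG k
    have sumO' : 2 * (∑ i : ZMod n, F i) + (∑ i : ZMod n, G i) = n := by
      rw [Finset.sum_add_distrib, Finset.sum_add_distrib, hs1, hs2] at sumO
      omega
    have sumI' : (∑ i : ZMod n, F i) + 2 * (∑ i : ZMod n, G i) = n := by
      rw [Finset.sum_add_distrib, Finset.sum_add_distrib, hs3, hs4] at sumI
      omega
    have hSF3 : 3 * (∑ i : ZMod n, F i) = n := by omega
    have hFle : ∀ x : ZMod n, F x ≤ 1 := by
      intro x; simp only [hF]; split <;> omega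
    have hD4 : ∀ j : ZMod n, F j + F (j + 4) ≤ 1 := by
      intro j
      by_contra hcon
      push_neg at hcon
      have hb1 := hFle j
      have hb2 := hFle (j + 4)
      have o1 := hexO (j - 2 - k)
      rw [show (j - 2 - k) - 1 = j - 3 - k from by ring, show (j - 2 - k) + 1 = j - 1 - k from by ring] at o1
      have o2 := hexO (j - k)
      rw [show (j - k) - 1 = j - 1 - k from by ring, show (j - k) + 1 = j + 1 - k from by ring] at o2
      have o3 := hexO (j + 2 - k)
      rw [show (j + 2 - k) - 1 = j + 1 - k from by ring, show (j + 2 - k) + 1 = j + 3 - k from by ring] at o3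
      have o4 := hexO (j + 4 - k)
      rw [show (j + 4 - k) - 1 = j + 3 - k from by ring, show (j + 4 - k) + 1 = j + 5 - k from by ring] at o4
      have o5 := hexO (j + 6 - k)
      rw [show (j + 6 - k) - 1 = j + 5 - k from by ring, show (j + 6 - k) + 1 = j + 7 - k from by ring] at o5
      have o6 := hexO (j - 1)
      rw [show (j - 1) - 1 = j - 2 from by ring, show (j - 1) + 1 = j from by ring] at o6
      have o7 := hexO (j + 3)
      rw [show (j + 3) - 1 = j + 2 from by ring, show (j + 3) + 1 = j + 4 from by ring] at o7
      have o8 := hexO (j + 5)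
      rw [show (j + 5) - 1 = j + 4 from by ring, show (j + 5) + 1 = j + 6 from by ring] at o8
      have o9 := hexO (j - 2 + k)
      rw [show (j - 2 + k) - 1 = j - 3 + k from by ring, show (j - 2 + k) + 1 = j - 1 + k from by ring] at o9
      have o10 := hexO (j + k)
      rw [show (j + k) - 1 = j - 1 + k from by ring, show (j + k) + 1 = j + 1 + k from by ring] at o10
      have o11 := hexO (j + 2 + k)
      rw [show (j + 2 + k) - 1 = j + 1 + k from by ring, show (j + 2 + k) + 1 = j + 3 + k from by ring] at o11
      have o12 := hexO (j + 4 + k)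
      rw [show (j + 4 + k) - 1 = j + 3 + k from by ring, show (j + 4 + k) + 1 = j + 5 + k from by ring] at o12
      have o13 := hexO (j + 6 + k)
      rw [show (j + 6 + k) - 1 = j + 5 + k from by ring, show (j + 6 + k) + 1 = j + 7 + k from by ring] at o13
      have i1 := hexI (j - 2)
      have i2 := hexI (j)
      have i3 := hexI (j + 2)
      have i4 := hexI (j + 4)
      have i5 := hexI (j + 6)
      omega
    have key5 : ∀ i : ZMod n, F (i - 1) + F (i + 1) + F (i + 3) ≤ 1 := by
      intro i
      have o1 := hexO i
      have o2 := hexO (i + 2)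
      rw [show (i + 2) - 1 = i + 1 from by ring, show (i + 2) + 1 = i + 3 from by ring] at o2
      have d := hD4 (i - 1)
      rw [show (i - 1) + 4 = i + 3 from by ring] at d
      omega
    have hs5 : ∑ i : ZMod n, F (i + 3) = ∑ i : ZMod n, F i := shiftF 3
    have sumS : ∑ i : ZMod n, (F (i - 1) + F (i + 1) + F (i + 3)) = n := by
      rw [Finset.sum_add_distrib, Finset.sum_add_distrib, hs1, hs2, hs5]
      omega
    have equal1 : ∀ i : ZMod n, F (i - 1) + F (i + 1) + F (i + 3) = 1 := by
      by_contra hcon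
      push_neg at hcon
      obtain ⟨i0, hi0⟩ := hcon
      have hlt : ∑ i : ZMod n, (F (i - 1) + F (i + 1) + F (i + 3)) < ∑ _i : ZMod n, 1 := by
        apply Finset.sum_lt_sum (fun i _ => key5 i)
        exact ⟨i0, Finset.mem_univ i0, by have := key5 i0; omega⟩
      rw [sumS] at hlt
      have : (n : ℕ) < n := by simpa [Finset.card_univ, ZMod.card] using hlt
      omega
    have Tstep : ∀ i : ZMod n, F i = 1 → G i = 1 → F (i + 3) = 1 ∧ G (i + 3) = 1 := by
      intro i hFi hGi
      have o0 := hexO i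
      have s0 := equal1 i
      have o1 := hexO (i + 1)
      rw [show (i + 1) - 1 = i from by ring, show (i + 1) + 1 = i + 2 from by ring] at o1
      have d := hD4 i
      have o3 := hexO (i + 3)
      rw [show (i + 3) - 1 = i + 2 from by ring, show (i + 3) + 1 = i + 4 from by ring] at o3
      omega
    have hFm : F m = 1 := by simp only [hF]; rw [if_pos hum]
    have hGm : G m = 1 := by simp only [hG]; rw [if_pos hvm]
    have Tall : ∀ jj : ℕ, F (m + 3 * (jj : ZMod n)) = 1 ∧ G (m + 3 * (jj : ZMod n)) = 1 := by
      intro jj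
      induction jj with
      | zero => simpa using ⟨hFm, hGm⟩
      | succ p ih =>
        have hstep := Tstep (m + 3 * (p : ZMod n)) ih.1 ih.2
        have hcast : m + 3 * ((p + 1 : ℕ) : ZMod n) = (m + 3 * (p : ZMod n)) + 3 := by
          push_cast; ring
        rw [hcast]
        exact hstep
    obtain ⟨l, hl, hl1⟩ := h
    have hFl : F l = 1 := by simp only [hF]; rw [if_pos hl]
    have hFl1 : F (l + 1) = 1 := by simp only [hF]; rw [if_pos hl1]
    have oL : F (l - 1) + F (l + 1) + G l = 1 := hexO l
    have oL1 := hexO (l + 1)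
    rw [show (l + 1) - 1 = l from by ring, show (l + 1) + 1 = l + 2 from by ring] at oL1
    set r : ℕ := (l + 1 - m).val with hr
    have hrc : ((r : ℕ) : ZMod n) = l + 1 - m := ZMod.natCast_rightInverse _
    set q : ℕ := r / 3 with hq
    set t : ℕ := r % 3 with ht
    have hdm : r = 3 * q + t := (Nat.div_add_mod r 3).symm
    have hlt3 : t < 3 := Nat.mod_lt _ (by omega)
    have hTq := Tall q
    have hcast2 : ((r : ℕ) : ZMod n) = 3 * (q : ZMod n) + (t : ZMod n) := by
      rw [hdm]; push_cast; ring
    have hpos : m + 3 * (q : ZMod n) = l + 1 - (t : ZMod n) := by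
      linear_combination hrc - hcast2
    rw [hpos] at hTq
    have ht3 : t = 0 ∨ t = 1 ∨ t = 2 := by omega
    rcases ht3 with ht0 | ht0 | ht0 <;> rw [ht0] at hTq
    · rw [show l + 1 - ((0 : ℕ) : ZMod n) = l + 1 from by push_cast; ring] at hTq
      omega
    · rw [show l + 1 - ((1 : ℕ) : ZMod n) = l from by push_cast; ring] at hTq
      omega
    · rw [show l + 1 - ((2 : ℕ) : ZMod n) = l - 1 from by push_cast; ring] at hTq
      omega
end

section
/- GP(n,k) admits a perfect code if and only if n ≡ 0 (mod 4) and k ≡ 1 (mod 2). -/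
variable {n k : ℕ}
lemma adj_ll {i j : ZMod n} : (GP n k).Adj (.inl i) (.inl j) ↔ i ≠ j ∧ (j = i + 1 ∨ i = j + 1) := Iff.rfl
lemma adj_lr {i j : ZMod n} : (GP n k).Adj (.inl i) (.inr j) ↔ i = j := Iff.rfl
lemma adj_rl {i j : ZMod n} : (GP n k).Adj (.inr i) (.inl j) ↔ i = j := Iff.rfl
lemma adj_rr {i j : ZMod n} : (GP n k).Adj (.inr i) (.inr j) ↔ i ≠ j ∧ (j = i + (k : ZMod n) ∨ i = j + (k : ZMod n)) := Iff.rfl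

theorem exists_code (hn : 3 ≤ n) (h4 : n % 4 = 0) (hk : k % 2 = 1) :
    ∃ C : Set (ZMod n ⊕ ZMod n), IsPerfectCode (GP n k) C := by
  haveI : NeZero n := ⟨by omega⟩
  have hdvd : (4:ℕ) ∣ n := Nat.dvd_of_mod_eq_zero h4
  set c : ZMod n →+* ZMod 4 := ZMod.castHom hdvd _ with hc
  have hck : c (k : ZMod n) = (k : ZMod 4) := map_natCast c k
  have hκ : (k : ZMod 4) = 1 ∨ (k : ZMod 4) = 3 := by
    have h2 : k % 4 = 1 ∨ k % 4 = 3 := by omega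
    have h3 : ((k % 4 : ℕ) : ZMod 4) = (k : ZMod 4) := ZMod.natCast_mod k 4
    rcases h2 with h | h <;> rw [h] at h3
    · left; exact_mod_cast h3.symm
    · right; exact_mod_cast h3.symm
  refine ⟨{z | Sum.elim (fun x => c x = (0:ZMod 4)) (fun x => c x = 2) z}, ?_, ?_⟩
  · -- independence
    rintro (i|i) hi (j|j) hj hadj <;>
      simp only [Set.mem_setOf_eq, Sum.elim_inl, Sum.elim_inr] at hi hj
    · obtain ⟨hne, h' | h'⟩ := hadj <;> have := congrArg c h' <;>
        rw [map_add, map_one, hi, hj] at this <;> exact absurd this (by decide)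
    · rw [adj_lr] at hadj; rw [hadj, hj] at hi; exact absurd hi (by decide)
    · rw [adj_rl] at hadj; rw [hadj, hj] at hi; exact absurd hi (by decide)
    · obtain ⟨hne, h' | h'⟩ := hadj <;> have := congrArg c h' <;>
        rw [map_add, hck, hi, hj] at this <;>
        rcases hκ with hκ' | hκ' <;> rw [hκ'] at this <;> exact absurd this (by decide)
  · -- domination
    rintro (i|i) hi <;> simp only [Set.mem_setOf_eq, Sum.elim_inl, Sum.elim_inr] at hi
    · -- outer vertex, c i ≠ 0
      have trich := (by decide : ∀ a : ZMod 4, a ≠ 0 → a = 1 ∨ a = 2 ∨ a = 3) _ hi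
      rcases trich with h1 | h1 | h1
      · -- unique neighbor inl (i-1)
        refine ⟨Sum.inl (i-1), ⟨?_, ?_⟩, ?_⟩
        · show c (i-1) = 0; rw [map_sub, map_one, h1]; decide
        · rw [adj_ll]
          refine ⟨fun he => ?_, Or.inr (by ring)⟩
          have := congrArg c he; rw [map_sub, map_one, h1] at this
          exact absurd this (by decide)
        · rintro (j|j) ⟨hjC, hadj⟩ <;>
            simp only [Set.mem_setOf_eq, Sum.elim_inl, Sum.elim_inr] at hjC
          · rw [adj_ll] at hadj
            obtain ⟨hne, h' | h'⟩ := hadj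
            · have := congrArg c h'; rw [map_add, map_one, h1, hjC] at this
              exact absurd this (by decide)
            · simp only [Sum.inl.injEq]; rw [h']; ring
          · rw [adj_lr] at hadj; rw [hadj, hjC] at h1; exact absurd h1 (by decide)
      · -- unique neighbor inr i
        refine ⟨Sum.inr i, ⟨h1, ?_⟩, ?_⟩
        · rw [adj_lr]
        · rintro (j|j) ⟨hjC, hadj⟩ <;>
            simp only [Set.mem_setOf_eq, Sum.elim_inl, Sum.elim_inr] at hjC
          · rw [adj_ll] at hadj
            obtain ⟨hne, h' | h'⟩ := hadj <;> have := congrArg c h' <;>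
              rw [map_add, map_one] at this <;> rw [h1, hjC] at this <;>
              exact absurd this (by decide)
          · rw [adj_lr] at hadj; rw [hadj]
      · -- unique neighbor inl (i+1)
        refine ⟨Sum.inl (i+1), ⟨?_, ?_⟩, ?_⟩
        · show c (i+1) = 0; rw [map_add, map_one, h1]; decide
        · rw [adj_ll]
          refine ⟨fun he => ?_, Or.inl rfl⟩
          have := congrArg c he; rw [map_add, map_one, h1] at this
          exact absurd this (by decide)
        · rintro (j|j) ⟨hjC, hadj⟩ <;>
            simp only [Set.mem_setOf_eq, Sum.elim_inl, Sum.elim_inr] at hjC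
          · rw [adj_ll] at hadj
            obtain ⟨hne, h' | h'⟩ := hadj
            · simp only [Sum.inl.injEq]; rw [h']
            · have := congrArg c h'; rw [map_add, map_one, h1, hjC] at this
              exact absurd this (by decide)
          · rw [adj_lr] at hadj; rw [hadj, hjC] at h1; exact absurd h1 (by decide)
    · -- inner vertex, c i ≠ 2
      have trich := (by decide : ∀ a : ZMod 4, a ≠ 2 → a = 0 ∨ a = 1 ∨ a = 3) _ hi
      have hknz : (k : ZMod n) ≠ 0 := by
        intro h; rw [h, map_zero] at hck
        rcases hκ with hκ' | hκ' <;> rw [hκ'] at hck <;> exact absurd hck (by decide)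
      have hknn : ∀ x : ZMod n, x ≠ x + (k:ZMod n) := fun x he => hknz (left_eq_add.mp he)
      rcases trich with h1 | h1 | h1
      · -- unique neighbor inl i
        refine ⟨Sum.inl i, ⟨h1, ?_⟩, ?_⟩
        · rw [adj_rl]
        · rintro (j|j) ⟨hjC, hadj⟩ <;>
            simp only [Set.mem_setOf_eq, Sum.elim_inl, Sum.elim_inr] at hjC
          · rw [adj_rl] at hadj; rw [hadj]
          · rw [adj_rr] at hadj
            obtain ⟨hne, h' | h'⟩ := hadj <;> have := congrArg c h' <;>
              rw [map_add, hck] at this <;> rw [h1, hjC] at this <;>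
              rcases hκ with hκ' | hκ' <;> rw [hκ'] at this <;> exact absurd this (by decide)
      · -- c i = 1 : neighbor inr (i+k) if κ=1, inr (i-k) if κ=3
        rcases hκ with hκ' | hκ'
        · refine ⟨Sum.inr (i + (k:ZMod n)), ⟨?_, ?_⟩, ?_⟩
          · show c _ = 2; rw [map_add, hck, h1, hκ']; decide
          · rw [adj_rr]
            refine ⟨fun he => hknn i he, Or.inl rfl⟩
          · rintro (j|j) ⟨hjC, hadj⟩ <;>
              simp only [Set.mem_setOf_eq, Sum.elim_inl, Sum.elim_inr] at hjC
            · rw [adj_rl] at hadj; rw [← hadj, h1] at hjC; exact absurd hjC (by decide)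
            · rw [adj_rr] at hadj
              obtain ⟨hne, h' | h'⟩ := hadj
              · simp only [Sum.inr.injEq]; rw [h']
              · have := congrArg c h'; rw [map_add, hck, h1, hjC, hκ'] at this
                exact absurd this (by decide)
        · refine ⟨Sum.inr (i - (k:ZMod n)), ⟨?_, ?_⟩, ?_⟩
          · show c _ = 2; rw [map_sub, hck, h1, hκ']; decide
          · rw [adj_rr]
            refine ⟨fun he => ?_, Or.inr (by ring)⟩
            exact hknz (sub_eq_self.mp he.symm)
          · rintro (j|j) ⟨hjC, hadj⟩ <;>
              simp only [Set.mem_setOf_eq, Sum.elim_inl, Sum.elim_inr] at hjC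
            · rw [adj_rl] at hadj; rw [← hadj, h1] at hjC; exact absurd hjC (by decide)
            · rw [adj_rr] at hadj
              obtain ⟨hne, h' | h'⟩ := hadj
              · have := congrArg c h'; rw [map_add, hck, h1, hjC, hκ'] at this
                exact absurd this (by decide)
              · simp only [Sum.inr.injEq]; rw [h']; ring
      · -- c i = 3 : neighbor inr (i-k) if κ=1, inr (i+k) if κ=3
        rcases hκ with hκ' | hκ'
        · refine ⟨Sum.inr (i - (k:ZMod n)), ⟨?_, ?_⟩, ?_⟩
          · show c _ = 2; rw [map_sub, hck, h1, hκ']; decide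
          · rw [adj_rr]
            refine ⟨fun he => ?_, Or.inr (by ring)⟩
            exact hknz (sub_eq_self.mp he.symm)
          · rintro (j|j) ⟨hjC, hadj⟩ <;>
              simp only [Set.mem_setOf_eq, Sum.elim_inl, Sum.elim_inr] at hjC
            · rw [adj_rl] at hadj; rw [← hadj, h1] at hjC; exact absurd hjC (by decide)
            · rw [adj_rr] at hadj
              obtain ⟨hne, h' | h'⟩ := hadj
              · have := congrArg c h'; rw [map_add, hck, h1, hjC, hκ'] at this
                exact absurd this (by decide)
              · simp only [Sum.inr.injEq]; rw [h']; ring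
        · refine ⟨Sum.inr (i + (k:ZMod n)), ⟨?_, ?_⟩, ?_⟩
          · show c _ = 2; rw [map_add, hck, h1, hκ']; decide
          · rw [adj_rr]
            refine ⟨fun he => hknn i he, Or.inl rfl⟩
          · rintro (j|j) ⟨hjC, hadj⟩ <;>
              simp only [Set.mem_setOf_eq, Sum.elim_inl, Sum.elim_inr] at hjC
            · rw [adj_rl] at hadj; rw [← hadj, h1] at hjC; exact absurd hjC (by decide)
            · rw [adj_rr] at hadj
              obtain ⟨hne, h' | h'⟩ := hadj
              · simp only [Sum.inr.injEq]; rw [h']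
              · have := congrArg c h'; rw [map_add, hck, h1, hjC, hκ'] at this
                exact absurd this (by decide)

structure Good (n : ℕ) (k' : ZMod n) (A B : Set (ZMod n)) : Prop where
  hAA : ∀ i ∈ A, i + 1 ∉ A
  hAB : ∀ i ∈ A, i ∉ B
  hBk : ∀ i ∈ B, i + k' ∉ B
  hex : ∀ i ∉ A, i ∈ B ∨ i + 1 ∈ A ∨ i - 1 ∈ A
  hu12 : ∀ i ∉ A, ¬(i + 1 ∈ A ∧ i - 1 ∈ A)
  hu13 : ∀ i ∉ A, ¬(i + 1 ∈ A ∧ i ∈ B)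
  hu23 : ∀ i ∉ A, ¬(i - 1 ∈ A ∧ i ∈ B)
  hinex : ∀ i ∉ B, i ∈ A ∨ i + k' ∈ B ∨ i - k' ∈ B
  hin1 : ∀ i ∉ B, ¬(i ∈ A ∧ i + k' ∈ B)
  hin2 : ∀ i ∉ B, ¬(i ∈ A ∧ i - k' ∈ B)
  hin3 : 2 * k' ≠ 0 → ∀ i ∉ B, ¬(i + k' ∈ B ∧ i - k' ∈ B)

namespace Good

variable {n : ℕ} {k' : ZMod n} {A B : Set (ZMod n)} (hg : Good n k' A B)
include hg

section basic
variable {p b q : ZMod n}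

lemma aA1 (hp : p ∈ A) : p + 1 ∉ A := hg.hAA p hp

lemma aA1' (hp : p ∈ A) : p - 1 ∉ A := fun h => hg.hAA _ h (by rwa [sub_add_cancel])

lemma aB (hp : p ∈ A) : p ∉ B := hg.hAB p hp

lemma bA (hb : b ∈ B) : b ∉ A := fun h => hg.hAB b h hb

lemma aA2 (hp : p ∈ A) : p + 2 ∉ A := by
  intro h
  exact hg.hu12 (p+1) (hg.aA1 hp) ⟨by rwa [show p+1+1 = p+2 by ring], by rwa [add_sub_cancel_right]⟩

lemma aA2' (hp : p ∈ A) : p - 2 ∉ A := by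
  intro h
  exact hg.hu12 (p-1) (hg.aA1' hp) ⟨by rwa [sub_add_cancel], by rwa [show p-1-1 = p-2 by ring]⟩

lemma aB1 (hp : p ∈ A) : p + 1 ∉ B := fun h =>
  hg.hu23 (p+1) (hg.aA1 hp) ⟨by rwa [add_sub_cancel_right], h⟩

lemma aB1' (hp : p ∈ A) : p - 1 ∉ B := fun h =>
  hg.hu13 (p-1) (hg.aA1' hp) ⟨by rwa [sub_add_cancel], h⟩

lemma aBk (hp : p ∈ A) : p + k' ∉ B := fun h => hg.hin1 p (hg.aB hp) ⟨hp, h⟩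

lemma aBk' (hp : p ∈ A) : p - k' ∉ B := fun h => hg.hin2 p (hg.aB hp) ⟨hp, h⟩

lemma bBk (hb : b ∈ B) : b + k' ∉ B := hg.hBk b hb

lemma bBk' (hb : b ∈ B) : b - k' ∉ B := fun h => hg.hBk _ h (by rwa [sub_add_cancel])

lemma bA1 (hb : b ∈ B) : b + 1 ∉ A := fun h => hg.hu13 b (hg.bA hb) ⟨h, hb⟩

lemma bA1' (hb : b ∈ B) : b - 1 ∉ A := fun h => hg.hu23 b (hg.bA hb) ⟨h, hb⟩

lemma bAk (hb : b ∈ B) : b + k' ∉ A := fun h =>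
  hg.hin2 (b + k') (hg.bBk hb) ⟨h, by rwa [add_sub_cancel_right]⟩

lemma bAk' (hb : b ∈ B) : b - k' ∉ A := fun h =>
  hg.hin1 (b - k') (hg.bBk' hb) ⟨h, by rwa [sub_add_cancel]⟩

lemma lr1 (hqa : q ∉ A) (hqb : q ∉ B) : q + 1 ∈ A ∨ q - 1 ∈ A := by
  rcases hg.hex q hqa with h | h | h
  · exact absurd h hqb
  · exact Or.inl h
  · exact Or.inr h

lemma no3run (hb : b ∈ B) (hp1 : b + 1 ∈ B) (hm1 : b - 1 ∈ B) : False := by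
  have hqa : b + k' ∉ A := hg.bAk hb
  have hqb : b + k' ∉ B := hg.bBk hb
  rcases hg.lr1 hqa hqb with h | h
  · exact hg.bAk hp1 (by rwa [show b+1+k' = b+k'+1 by ring])
  · exact hg.bAk hm1 (by rwa [show b-1+k' = b+k'-1 by ring])

lemma trich (hp : p ∈ A) : (p + 3 ∈ A ∧ p + 2 ∉ B) ∨ (p + 2 ∈ B ∧ p + 3 ∉ A) := by
  have h2 : p + 2 ∉ A := hg.aA2 hp
  have h1 : p + 1 ∉ A := hg.aA1 hp
  rcases hg.hex (p+2) h2 with h | h | h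
  · exact Or.inr ⟨h, fun h3 => hg.hu13 (p+2) h2 ⟨by rwa [show p+2+1 = p+3 by ring], h⟩⟩
  · rw [show p+2+1 = p+3 by ring] at h
    exact Or.inl ⟨h, fun hB => hg.hu13 (p+2) h2 ⟨by rwa [show p+2+1 = p+3 by ring], hB⟩⟩
  · rw [show p+2-1 = p+1 by ring] at h
    exact absurd h h1

lemma run2J (hb : b ∈ B) (hb1 : b + 1 ∈ B) : b + k' - 1 ∈ A ∧ (b + k' - 1) + 3 ∈ A := by
  have hqa : b + k' ∉ A := hg.bAk hb
  have hqb : b + k' ∉ B := hg.bBk hb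
  have hq1a : b + k' + 1 ∉ A := by
    rw [show b+k'+1 = b+1+k' by ring]; exact hg.bAk hb1
  have hq1b : b + k' + 1 ∉ B := by
    rw [show b+k'+1 = b+1+k' by ring]; exact hg.bBk hb1
  have hm : b + k' - 1 ∈ A := by
    rcases hg.lr1 hqa hqb with h | h
    · exact absurd h hq1a
    · exact h
  refine ⟨hm, ?_⟩
  rcases hg.lr1 hq1a hq1b with h | h
  · rwa [show (b+k'-1)+3 = b+k'+1+1 by ring]
  · rw [show b+k'+1-1 = b+k' by ring] at h
    exact absurd h hqa

lemma run2J' (hb : b ∈ B) (hb1 : b + 1 ∈ B) : b - k' - 1 ∈ A ∧ (b - k' - 1) + 3 ∈ A := by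
  have hqa : b - k' ∉ A := hg.bAk' hb
  have hqb : b - k' ∉ B := hg.bBk' hb
  have hq1a : b - k' + 1 ∉ A := by
    rw [show b-k'+1 = b+1-k' by ring]; exact hg.bAk' hb1
  have hq1b : b - k' + 1 ∉ B := by
    rw [show b-k'+1 = b+1-k' by ring]; exact hg.bBk' hb1
  have hm : b - k' - 1 ∈ A := by
    rcases hg.lr1 hqa hqb with h | h
    · exact absurd h hq1a
    · exact h
  refine ⟨hm, ?_⟩
  rcases hg.lr1 hq1a hq1b with h | h
  · rwa [show (b-k'-1)+3 = b-k'+1+1 by ring]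
  · rw [show b-k'+1-1 = b-k' by ring] at h
    exact absurd h hqa

lemma isoPred (hb : b ∈ B) (h1' : b - 1 ∉ B) : b - 2 ∈ A := by
  have hqa : b - 1 ∉ A := hg.bA1' hb
  rcases hg.lr1 hqa h1' with h | h
  · rw [sub_add_cancel] at h; exact absurd h (hg.bA hb)
  · rwa [show b-1-1 = b-2 by ring] at h

lemma A_nonempty : A.Nonempty := by
  by_contra h
  push_neg at h
  have hB : ∀ i : ZMod n, i ∈ B := by
    intro i
    rcases hg.hex i (by simp [h]) with hh | hh | hh
    · exact hh
    · simp [h] at hh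
    · simp [h] at hh
  exact hg.hBk 0 (hB 0) (hB (0 + k'))

end basic

section key
variable [NeZero n]

lemma key (h2 : (2 : ZMod n) ≠ 0) (hk : k' ≠ 0) :
    (∀ p ∈ A, p + 3 ∉ A) ∧ (∀ b ∈ B, b + 1 ∉ B) := by
  classical
  set Af := Finset.univ.filter (fun i : ZMod n => i ∈ A) with hAfd
  set Bf := Finset.univ.filter (fun i : ZMod n => i ∈ B) with hBfd
  set LRf := Finset.univ.filter (fun i : ZMod n => i ∉ A ∧ i ∉ B) with hLRd
  set Jf := Af.filter (fun p => p + 3 ∈ A) with hJd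
  set AnJ := Af.filter (fun p => ¬ p + 3 ∈ A) with hAnJd
  set T2f := AnJ.filter (fun p => p + 3 ∈ B) with hT2d
  set T1f := AnJ.filter (fun p => ¬ p + 3 ∈ B) with hT1d
  set R2f := Bf.filter (fun b => b + 1 ∈ B) with hR2d
  set BnR := Bf.filter (fun b => ¬ b + 1 ∈ B) with hBnRd
  set R2f' := BnR.filter (fun b => b - 1 ∈ B) with hR2d'
  set S1f := BnR.filter (fun b => ¬ b - 1 ∈ B) with hS1d
  have memLR : ∀ q : ZMod n, q ∈ LRf ↔ (q ∉ A ∧ q ∉ B) := by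
    intro q; simp [hLRd]
  have memAf : ∀ q : ZMod n, q ∈ Af ↔ q ∈ A := by intro q; simp [hAfd]
  have memBf : ∀ q : ZMod n, q ∈ Bf ↔ q ∈ B := by intro q; simp [hBfd]
  have memJf : ∀ q : ZMod n, q ∈ Jf ↔ (q ∈ A ∧ q + 3 ∈ A) := by
    intro q; simp [hJd, hAfd, Finset.mem_filter]
  have memT2 : ∀ q : ZMod n, q ∈ T2f ↔ (q ∈ A ∧ q + 3 ∉ A ∧ q + 3 ∈ B) := by
    intro q; simp [hT2d, hAnJd, hAfd, Finset.mem_filter, and_assoc]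
  have memT1 : ∀ q : ZMod n, q ∈ T1f ↔ (q ∈ A ∧ q + 3 ∉ A ∧ q + 3 ∉ B) := by
    intro q; simp [hT1d, hAnJd, hAfd, Finset.mem_filter, and_assoc]
  have memR2 : ∀ q : ZMod n, q ∈ R2f ↔ (q ∈ B ∧ q + 1 ∈ B) := by
    intro q; simp [hR2d, hBfd, Finset.mem_filter]
  have memR2' : ∀ q : ZMod n, q ∈ R2f' ↔ (q ∈ B ∧ q + 1 ∉ B ∧ q - 1 ∈ B) := by
    intro q; simp [hR2d', hBnRd, hBfd, Finset.mem_filter, and_assoc]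
  have memS1 : ∀ q : ZMod n, q ∈ S1f ↔ (q ∈ B ∧ q + 1 ∉ B ∧ q - 1 ∉ B) := by
    intro q; simp [hS1d, hBnRd, hBfd, Finset.mem_filter, and_assoc]
  -- outer double counting : |LR| = 2 |A|
  have c1 : LRf.card = Af.card + Af.card := by
    rw [← Finset.card_filter_add_card_filter_not (s := LRf)
      (p := fun q => q + 1 ∈ A)]
    congr 1
    · apply Finset.card_nbij (fun q => q + 1)
      · intro a ha
        simp only [Finset.mem_coe] at ha ⊢
        rw [Finset.mem_filter] at ha
        exact (memAf _).2 ha.2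
      · exact (add_left_injective 1).injOn
      · intro x hx
        rw [Finset.mem_coe, memAf] at hx
        refine ⟨x - 1, Finset.mem_coe.mpr ?_, show x - 1 + 1 = x by ring⟩
        rw [Finset.mem_filter]
        refine ⟨(memLR _).2 ⟨hg.aA1' hx, hg.aB1' hx⟩, ?_⟩
        rw [show x - 1 + 1 = x by ring]; exact hx
    · apply Finset.card_nbij (fun q => q - 1)
      · intro a ha
        simp only [Finset.mem_coe] at ha ⊢
        rw [Finset.mem_filter, memLR] at ha
        rcases hg.lr1 ha.1.1 ha.1.2 with h | h
        · exact absurd h ha.2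
        · exact (memAf _).2 h
      · exact fun a _ b _ h => by
          have : a - 1 = b - 1 := h
          have := congrArg (fun z : ZMod n => z + 1) this
          simpa [sub_add_cancel] using this
      · intro x hx
        rw [Finset.mem_coe, memAf] at hx
        refine ⟨x + 1, Finset.mem_coe.mpr ?_, show x + 1 - 1 = x by ring⟩
        rw [Finset.mem_filter]
        refine ⟨(memLR _).2 ⟨hg.aA1 hx, hg.aB1 hx⟩, ?_⟩
        intro h; exact hg.aA2 hx (by rwa [show x+1+1 = x+2 by ring] at h)
  -- structure decomposition of A and B
  have c3 : Af.card = Jf.card + (T2f.card + T1f.card) := by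
    rw [← Finset.card_filter_add_card_filter_not (s := Af) (p := fun p => p + 3 ∈ A),
      ← Finset.card_filter_add_card_filter_not (s := AnJ) (p := fun p => p + 3 ∈ B)]
  have c4 : Bf.card = R2f.card + (R2f'.card + S1f.card) := by
    rw [← Finset.card_filter_add_card_filter_not (s := Bf) (p := fun b => b + 1 ∈ B),
      ← Finset.card_filter_add_card_filter_not (s := BnR) (p := fun b => b - 1 ∈ B)]
  have c5 : R2f'.card = R2f.card := by
    apply Finset.card_nbij (fun b => b - 1)
    · intro a ha
      simp only [Finset.mem_coe] at ha ⊢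
      rw [memR2'] at ha
      rw [memR2]
      refine ⟨ha.2.2, ?_⟩
      rw [show a - 1 + 1 = a by ring]; exact ha.1
    · exact fun a _ b _ h => by
        have : a - 1 = b - 1 := h
        have := congrArg (fun z : ZMod n => z + 1) this
        simpa [sub_add_cancel] using this
    · intro x hx
      rw [Finset.mem_coe, memR2] at hx
      refine ⟨x + 1, Finset.mem_coe.mpr ?_, show x + 1 - 1 = x by ring⟩
      rw [memR2']
      refine ⟨hx.2, ?_, ?_⟩
      · intro h
        exact hg.no3run hx.2 h (by rw [show x+1-1 = x by ring]; exact hx.1)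
      · rw [show x+1-1 = x by ring]; exact hx.1
  have c6 : T1f.card = S1f.card := by
    apply Finset.card_nbij (fun p => p + 2)
    · intro a ha
      simp only [Finset.mem_coe] at ha ⊢
      rw [memT1] at ha
      obtain ⟨hA, h3A, h3B⟩ := ha
      have h2B : a + 2 ∈ B := by
        rcases hg.trich hA with h | h
        · exact absurd h.1 h3A
        · exact h.1
      rw [memS1]
      refine ⟨h2B, ?_, ?_⟩
      · rw [show a+2+1 = a+3 by ring]; exact h3B
      · rw [show a+2-1 = a+1 by ring]; exact hg.aB1 hA
    · exact (add_left_injective 2).injOn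
    · intro x hx
      rw [Finset.mem_coe, memS1] at hx
      obtain ⟨hB, hp, hm⟩ := hx
      refine ⟨x - 2, Finset.mem_coe.mpr ?_, show x - 2 + 2 = x by ring⟩
      rw [memT1]
      have hA : x - 2 ∈ A := hg.isoPred hB hm
      refine ⟨hA, ?_, ?_⟩
      · rw [show x-2+3 = x+1 by ring]; exact hg.bA1 hB
      · rw [show x-2+3 = x+1 by ring]; exact hp
  have c7 : T2f.card = R2f.card := by
    apply Finset.card_nbij (fun p => p + 2)
    · intro a ha
      simp only [Finset.mem_coe] at ha ⊢
      rw [memT2] at ha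
      obtain ⟨hA, h3A, h3B⟩ := ha
      have h2B : a + 2 ∈ B := by
        rcases hg.trich hA with h | h
        · exact absurd h.1 h3A
        · exact h.1
      rw [memR2]
      refine ⟨h2B, ?_⟩
      rw [show a+2+1 = a+3 by ring]; exact h3B
    · exact (add_left_injective 2).injOn
    · intro x hx
      rw [Finset.mem_coe, memR2] at hx
      obtain ⟨hB, hp⟩ := hx
      have hm : x - 1 ∉ B := fun h => hg.no3run hB hp h
      have hA : x - 2 ∈ A := hg.isoPred hB hm
      refine ⟨x - 2, Finset.mem_coe.mpr ?_, show x - 2 + 2 = x by ring⟩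
      rw [memT2]
      refine ⟨hA, ?_, ?_⟩
      · rw [show x-2+3 = x+1 by ring]; exact hg.bA1 hB
      · rw [show x-2+3 = x+1 by ring]; exact hp
  by_cases h2k : 2 * k' = 0
  · -- degenerate case : |LR| = |B|
    exfalso
    have c2' : LRf.card = Bf.card := by
      apply Finset.card_nbij (fun q => q + k')
      · intro a ha
        simp only [Finset.mem_coe] at ha ⊢
        rw [memLR] at ha
        rw [memBf]
        rcases hg.hinex a ha.2 with h | h | h
        · exact absurd h ha.1
        · exact h
        · rwa [show a - k' = a + k' by linear_combination -h2k] at h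
      · exact (add_left_injective k').injOn
      · intro x hx
        rw [Finset.mem_coe, memBf] at hx
        refine ⟨x + k', Finset.mem_coe.mpr ?_, show x + k' + k' = x by linear_combination h2k⟩
        rw [memLR]
        exact ⟨hg.bAk hx, hg.bBk hx⟩
    have hJ0 : Jf.card = 0 ∧ S1f.card = 0 := by omega
    have hR0 : R2f.card = 0 := by
      by_contra h
      obtain ⟨b, hb⟩ := Finset.card_pos.mp (Nat.pos_of_ne_zero h)
      rw [memR2] at hb
      obtain ⟨hj1, hj2⟩ := hg.run2J hb.1 hb.2
      have hmem : b + k' - 1 ∈ Jf := (memJf _).2 ⟨hj1, hj2⟩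
      have := Finset.card_pos.mpr ⟨_, hmem⟩
      omega
    have hA0 : Af.card = 0 := by omega
    obtain ⟨p₀, hp₀⟩ := hg.A_nonempty
    have hmem : p₀ ∈ Af := (memAf _).2 hp₀
    have := Finset.card_pos.mpr ⟨_, hmem⟩
    omega
  · -- main case : |LR| = 2 |B|
    have c2 : LRf.card = Bf.card + Bf.card := by
      rw [← Finset.card_filter_add_card_filter_not (s := LRf)
        (p := fun q => q + k' ∈ B)]
      congr 1
      · apply Finset.card_nbij (fun q => q + k')
        · intro a ha
          simp only [Finset.mem_coe] at ha ⊢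
          rw [Finset.mem_filter] at ha
          exact (memBf _).2 ha.2
        · exact (add_left_injective k').injOn
        · intro x hx
          rw [Finset.mem_coe, memBf] at hx
          refine ⟨x - k', Finset.mem_coe.mpr ?_, show x - k' + k' = x by ring⟩
          rw [Finset.mem_filter]
          refine ⟨(memLR _).2 ⟨hg.bAk' hx, hg.bBk' hx⟩, ?_⟩
          rw [show x - k' + k' = x by ring]; exact hx
      · apply Finset.card_nbij (fun q => q - k')
        · intro a ha
          simp only [Finset.mem_coe] at ha ⊢
          rw [Finset.mem_filter, memLR] at ha
          rw [memBf]
          rcases hg.hinex a ha.1.2 with h | h | h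
          · exact absurd h ha.1.1
          · exact absurd h ha.2
          · exact h
        · exact fun a _ b _ h => by
            have : a - k' = b - k' := h
            have := congrArg (fun z : ZMod n => z + k') this
            simpa [sub_add_cancel] using this
        · intro x hx
          rw [Finset.mem_coe, memBf] at hx
          refine ⟨x + k', Finset.mem_coe.mpr ?_, show x + k' - k' = x by ring⟩
          rw [Finset.mem_filter]
          refine ⟨(memLR _).2 ⟨hg.bAk hx, hg.bBk hx⟩, ?_⟩
          intro h
          exact hg.hin3 h2k (x + k') (hg.bBk hx) ⟨h, by rw [show x+k'-k' = x by ring]; exact hx⟩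
    -- junction bound : 2 |R2| ≤ |J|
    have c8 : R2f.card + R2f.card ≤ Jf.card := by
      have himg1 : Finset.image (fun b => b + k' - 1) R2f ⊆ Jf := by
        intro x hx
        simp only [Finset.mem_image] at hx
        obtain ⟨b, hb, rfl⟩ := hx
        rw [memR2] at hb
        exact (memJf _).2 (hg.run2J hb.1 hb.2)
      have himg2 : Finset.image (fun b => b - k' - 1) R2f ⊆ Jf := by
        intro x hx
        simp only [Finset.mem_image] at hx
        obtain ⟨b, hb, rfl⟩ := hx
        rw [memR2] at hb
        exact (memJf _).2 (hg.run2J' hb.1 hb.2)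
      have hdisj : Disjoint (Finset.image (fun b => b + k' - 1) R2f)
          (Finset.image (fun b => b - k' - 1) R2f) := by
        rw [Finset.disjoint_left]
        intro x hx1 hx2
        simp only [Finset.mem_image] at hx1 hx2
        obtain ⟨b, hb, he1⟩ := hx1
        obtain ⟨b', hb', he2⟩ := hx2
        rw [memR2] at hb hb'
        have hee : b + k' = b' - k' := by
          have h12 := he1.trans he2.symm
          linear_combination h12
        have hq : b + k' ∉ B := hg.bBk hb.1
        refine hg.hin3 h2k (b + k') hq ⟨?_, ?_⟩
        · rw [hee, sub_add_cancel]; exact hb'.1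
        · rw [show b + k' - k' = b by ring]; exact hb.1
      have hcard1 : (Finset.image (fun b => b + k' - 1) R2f).card = R2f.card := by
        have he : (fun b : ZMod n => b + k' - 1) = fun b => b + (k' - 1) := by
          funext b; ring
        rw [he, Finset.card_image_of_injective _ (add_left_injective _)]
      have hcard2 : (Finset.image (fun b => b - k' - 1) R2f).card = R2f.card := by
        have he : (fun b : ZMod n => b - k' - 1) = fun b => b + (-k' - 1) := by
          funext b; ring
        rw [he, Finset.card_image_of_injective _ (add_left_injective _)]
      calc R2f.card + R2f.card = (Finset.image (fun b => b + k' - 1) R2f ∪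
            Finset.image (fun b => b - k' - 1) R2f).card := by
              rw [Finset.card_union_of_disjoint hdisj, hcard1, hcard2]
        _ ≤ Jf.card := Finset.card_le_card (Finset.union_subset himg1 himg2)
    have hJR : Jf.card = 0 ∧ R2f.card = 0 := by omega
    constructor
    · intro p hp hp3
      have hmem : p ∈ Jf := (memJf _).2 ⟨hp, hp3⟩
      have := Finset.card_pos.mpr ⟨_, hmem⟩
      omega
    · intro b hb hb1
      have hmem : b ∈ R2f := (memR2 _).2 ⟨hb, hb1⟩
      have := Finset.card_pos.mpr ⟨_, hmem⟩
      omega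

end key



section step4
variable {p : ZMod n}

lemma step4 (hJ : ∀ p ∈ A, p + 3 ∉ A) (hR2 : ∀ b ∈ B, b + 1 ∉ B) (hp : p ∈ A) :
    p + 2 ∈ B ∧ p + 4 ∈ A := by
  have h2B : p + 2 ∈ B := by
    rcases hg.trich hp with h | h
    · exact absurd h.1 (hJ p hp)
    · exact h.1
  have h3A : p + 3 ∉ A := by
    have := hg.bA1 h2B
    rwa [show p+2+1 = p+3 by ring] at this
  have h3B : p + 3 ∉ B := fun h => hR2 (p+2) h2B (by rwa [show p+2+1 = p+3 by ring])
  refine ⟨h2B, ?_⟩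
  rcases hg.lr1 h3A h3B with h | h
  · rwa [show p+3+1 = p+4 by ring] at h
  · rw [show p+3-1 = p+2 by ring] at h
    exact absurd h (hg.bA h2B)

end step4
end Good

lemma build {n k : ℕ} {C : Set (ZMod n ⊕ ZMod n)} (hn : 3 ≤ n) (hk0 : (k : ZMod n) ≠ 0)
    (hC : IsPerfectCode (GP n k) C) :
    Good n (k : ZMod n) {i | Sum.inl i ∈ C} {i | Sum.inr i ∈ C} := by
  haveI : NeZero n := ⟨by omega⟩
  have h1 : (1 : ZMod n) ≠ 0 := by
    intro h
    rw [show (1:ZMod n) = ((1:ℕ):ZMod n) by norm_num, ZMod.natCast_eq_zero_iff] at h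
    have := Nat.le_of_dvd one_pos h; omega
  have h2 : (2 : ZMod n) ≠ 0 := by
    intro h
    rw [show (2:ZMod n) = ((2:ℕ):ZMod n) by norm_num, ZMod.natCast_eq_zero_iff] at h
    have := Nat.le_of_dvd two_pos h; omega
  obtain ⟨hind, hdom⟩ := hC
  constructor
  · -- hAA
    intro i hi h
    exact hind _ hi _ h (adj_ll.mpr ⟨left_ne_add.mpr h1, Or.inl rfl⟩)
  · -- hAB
    intro i hi h
    exact hind _ hi _ h (adj_lr.mpr rfl)
  · -- hBk
    intro i hi h
    exact hind _ hi _ h (adj_rr.mpr ⟨left_ne_add.mpr hk0, Or.inl rfl⟩)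
  · -- hex
    intro i hi
    obtain ⟨y, ⟨hyC, hadj⟩, _⟩ := hdom (Sum.inl i) hi
    rcases y with j | j
    · rw [adj_ll] at hadj
      obtain ⟨hne, h | h⟩ := hadj
      · right; left; rw [← h]; exact hyC
      · right; right
        have hj : j = i - 1 := by rw [h]; ring
        rw [← hj]; exact hyC
    · rw [adj_lr] at hadj
      left; rw [hadj]; exact hyC
  · -- hu12
    rintro i hi ⟨ha, hb⟩
    obtain ⟨y, hy, huniq⟩ := hdom (Sum.inl i) hi
    have e1 := huniq (Sum.inl (i+1)) ⟨ha, adj_ll.mpr ⟨left_ne_add.mpr h1, Or.inl rfl⟩⟩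
    have e2 := huniq (Sum.inl (i-1)) ⟨hb, adj_ll.mpr
      ⟨fun h => h1 (by linear_combination h), Or.inr (by ring)⟩⟩
    have e := Sum.inl.inj (e1.trans e2.symm)
    exact h2 (by linear_combination e)
  · -- hu13
    rintro i hi ⟨ha, hb⟩
    obtain ⟨y, hy, huniq⟩ := hdom (Sum.inl i) hi
    have e1 := huniq (Sum.inl (i+1)) ⟨ha, adj_ll.mpr ⟨left_ne_add.mpr h1, Or.inl rfl⟩⟩
    have e2 := huniq (Sum.inr i) ⟨hb, adj_lr.mpr rfl⟩
    exact absurd (e1.trans e2.symm) (by simp)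
  · -- hu23
    rintro i hi ⟨ha, hb⟩
    obtain ⟨y, hy, huniq⟩ := hdom (Sum.inl i) hi
    have e1 := huniq (Sum.inl (i-1)) ⟨ha, adj_ll.mpr
      ⟨fun h => h1 (by linear_combination h), Or.inr (by ring)⟩⟩
    have e2 := huniq (Sum.inr i) ⟨hb, adj_lr.mpr rfl⟩
    exact absurd (e1.trans e2.symm) (by simp)
  · -- hinex
    intro i hi
    obtain ⟨y, ⟨hyC, hadj⟩, _⟩ := hdom (Sum.inr i) hi
    rcases y with j | j
    · rw [adj_rl] at hadj
      left; rw [hadj]; exact hyC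
    · rw [adj_rr] at hadj
      obtain ⟨hne, h | h⟩ := hadj
      · right; left; rw [← h]; exact hyC
      · right; right
        have hj : j = i - k := by rw [h]; ring
        rw [← hj]; exact hyC
  · -- hin1
    rintro i hi ⟨ha, hb⟩
    obtain ⟨y, hy, huniq⟩ := hdom (Sum.inr i) hi
    have e1 := huniq (Sum.inl i) ⟨ha, adj_rl.mpr rfl⟩
    have e2 := huniq (Sum.inr (i + k)) ⟨hb, adj_rr.mpr ⟨left_ne_add.mpr hk0, Or.inl rfl⟩⟩
    exact absurd (e1.trans e2.symm) (by simp)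
  · -- hin2
    rintro i hi ⟨ha, hb⟩
    obtain ⟨y, hy, huniq⟩ := hdom (Sum.inr i) hi
    have e1 := huniq (Sum.inl i) ⟨ha, adj_rl.mpr rfl⟩
    have e2 := huniq (Sum.inr (i - k)) ⟨hb, adj_rr.mpr
      ⟨fun h => hk0 (by linear_combination h), Or.inr (by ring)⟩⟩
    exact absurd (e1.trans e2.symm) (by simp)
  · -- hin3
    rintro h2k i hi ⟨ha, hb⟩
    obtain ⟨y, hy, huniq⟩ := hdom (Sum.inr i) hi
    have e1 := huniq (Sum.inr (i + k)) ⟨ha, adj_rr.mpr ⟨left_ne_add.mpr hk0, Or.inl rfl⟩⟩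
    have e2 := huniq (Sum.inr (i - k)) ⟨hb, adj_rr.mpr
      ⟨fun h => hk0 (by linear_combination h), Or.inr (by ring)⟩⟩
    have e := Sum.inr.inj (e1.trans e2.symm)
    exact h2k (by linear_combination e)

theorem reverse_dir {n k : ℕ} {C : Set (ZMod n ⊕ ZMod n)} (hn : 3 ≤ n)
    (hk0 : (k : ZMod n) ≠ 0) (hC : IsPerfectCode (GP n k) C) :
    n % 4 = 0 ∧ k % 2 = 1 := by
  haveI : NeZero n := ⟨by omega⟩
  have h2 : (2 : ZMod n) ≠ 0 := by
    intro h
    rw [show (2:ZMod n) = ((2:ℕ):ZMod n) by norm_num, ZMod.natCast_eq_zero_iff] at h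
    have := Nat.le_of_dvd two_pos h; omega
  have hg := build hn hk0 hC
  obtain ⟨hJ, hR2⟩ := hg.key h2 hk0
  have hstep : ∀ p ∈ {i | Sum.inl i ∈ C}, p + 2 ∈ {i | Sum.inr i ∈ C} ∧ p + 4 ∈ {i | Sum.inl i ∈ C} :=
    fun p hp => hg.step4 hJ hR2 hp
  obtain ⟨p₀, hp₀⟩ := hg.A_nonempty
  have hiter : ∀ m : ℕ, p₀ + ((4 * m : ℕ) : ZMod n) ∈ {i | Sum.inl i ∈ C} := by
    intro m
    induction m with
    | zero => simpa using hp₀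
    | succ m ih =>
        have h4 := (hstep _ ih).2
        have he : p₀ + ((4*(m+1) : ℕ) : ZMod n) = p₀ + ((4*m:ℕ):ZMod n) + 4 := by
          push_cast; ring
        rw [he]; exact h4
  have hn4 : n % 4 = 0 := by
    by_contra hmod
    rcases (show n % 4 = 1 ∨ n % 4 = 2 ∨ n % 4 = 3 by omega) with h | h | h
    · have h4m : 4 * ((3*n+1)/4) = 3*n+1 := by omega
      have hmem := hiter ((3*n+1)/4)
      rw [h4m, show ((3*n+1 : ℕ) : ZMod n) = 1 by push_cast [ZMod.natCast_self]; ring] at hmem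
      exact hg.aA1 hp₀ hmem
    · have h4m : 4 * ((3*n+2)/4) = 3*n+2 := by omega
      have hmem := hiter ((3*n+2)/4)
      rw [h4m, show ((3*n+2 : ℕ) : ZMod n) = 2 by push_cast [ZMod.natCast_self]; ring] at hmem
      exact hg.bA (hstep _ hp₀).1 hmem
    · have h4m : 4 * ((n+1)/4) = n+1 := by omega
      have hmem := hiter ((n+1)/4)
      rw [h4m, show ((n+1 : ℕ) : ZMod n) = 1 by push_cast [ZMod.natCast_self]; ring] at hmem
      exact hg.aA1 hp₀ hmem
  refine ⟨hn4, ?_⟩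
  have hdvd : (4:ℕ) ∣ n := Nat.dvd_of_mod_eq_zero hn4
  set c : ZMod n →+* ZMod 4 := ZMod.castHom hdvd _ with hcd
  have hc2 : c (2 : ZMod n) = 2 := by
    rw [show (2:ZMod n) = ((2:ℕ):ZMod n) by norm_num, map_natCast]; norm_num
  have hAc : ∀ x : ZMod n, c (x - p₀) = 0 → x ∈ {i | Sum.inl i ∈ C} := by
    intro x hx
    have hd : (((x - p₀).val : ℕ) : ZMod n) = x - p₀ := ZMod.natCast_rightInverse _
    have h4d : (4:ℕ) ∣ (x - p₀).val := by
      have hz : (((x - p₀).val : ℕ) : ZMod 4) = 0 := by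
        have := map_natCast c ((x - p₀).val)
        rw [hd, hx] at this
        exact this.symm
      exact (ZMod.natCast_eq_zero_iff _ _).1 hz
    obtain ⟨m, hm⟩ := h4d
    have hmem := hiter m
    rw [← hm, hd, show p₀ + (x - p₀) = x by ring] at hmem
    exact hmem
  have hBc : ∀ x : ZMod n, c (x - p₀) = 2 → x ∈ {i | Sum.inr i ∈ C} := by
    intro x hx
    have hxA : x - 2 ∈ {i | Sum.inl i ∈ C} := by
      apply hAc
      rw [show x - 2 - p₀ = (x - p₀) - 2 by ring, map_sub, hx, hc2, sub_self]
    have hmem := (hstep _ hxA).1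
    rwa [show x - 2 + 2 = x by ring] at hmem
  have hb : p₀ + 2 ∈ {i | Sum.inr i ∈ C} := (hstep _ hp₀).1
  have hqA : p₀ + 2 + (k:ZMod n) ∉ {i | Sum.inl i ∈ C} := hg.bAk hb
  have hqB : p₀ + 2 + (k:ZMod n) ∉ {i | Sum.inr i ∈ C} := hg.bBk hb
  have hkc2 : ((k:ℕ) : ZMod 4) ≠ 2 := by
    intro h
    apply hqA (hAc _ ?_)
    rw [show p₀ + 2 + (k:ZMod n) - p₀ = (k:ZMod n) + 2 by ring, map_add, map_natCast, h, hc2]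
    decide
  have hkc0 : ((k:ℕ) : ZMod 4) ≠ 0 := by
    intro h
    apply hqB (hBc _ ?_)
    rw [show p₀ + 2 + (k:ZMod n) - p₀ = (k:ZMod n) + 2 by ring, map_add, map_natCast, h, hc2]
    decide
  have hmod4 : ((k % 4 : ℕ) : ZMod 4) = (k : ZMod 4) := ZMod.natCast_mod k 4
  rcases (show k % 4 = 0 ∨ k % 4 = 1 ∨ k % 4 = 2 ∨ k % 4 = 3 by omega) with h|h|h|h
  · rw [h] at hmod4
    simp only [Nat.cast_zero] at hmod4
    exact absurd hmod4.symm hkc0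
  · omega
  · rw [h] at hmod4
    rw [show ((2:ℕ):ZMod 4) = 2 by norm_num] at hmod4
    exact absurd hmod4.symm hkc2
  · omega

/-- GP(n,k) admits a perfect code iff n ≡ 0 (mod 4) and k ≡ 1 (mod 2). -/
theorem stmt_16 (n k : ℕ) (hn : 3 ≤ n) (hk0 : (k : ZMod n) ≠ 0) :
    (∃ C : Set (ZMod n ⊕ ZMod n), IsPerfectCode (GP n k) C) ↔
      n % 4 = 0 ∧ k % 2 = 1 := by
  constructor
  · rintro ⟨C, hC⟩
    exact reverse_dir hn hk0 hC
  · rintro ⟨h4, hk⟩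
    exact exists_code hn h4 hk
end
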